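/- arXiv:1510.02645 — 10 statements merged into one kernel-verified Lean document; each statement's English description precedes it below -/
import Mathlib

section
/- Let n ≥ 2. Every matrix A in GL₂(Z/2^n) with A ≠ I, A² = I, and both diagonal entries even is conjugate in GL₂(Z/2^n) to the matrix [[0,1],[1,0]]. -/
lemma unit_of_not_even (n : ℕ) (x : ZMod (2^n)) (h : ¬ Even x) : IsUnit x := by
  haveI : NeZero ((2:ℕ)^n) := ⟨by positivity⟩
  have hx : ((x.val : ℕ) : ZMod (2^n)) = x := by
    rw [ZMod.natCast_val, ZMod.cast_id]
  rw [← hx, ZMod.isUnit_iff_coprime]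
  have hodd : ¬ 2 ∣ x.val := by
    intro ⟨k, hk⟩
    exact h ⟨(k : ZMod (2^n)), by rw [← hx, hk]; push_cast; ring⟩
  exact Nat.Coprime.pow_right n
    (Nat.coprime_comm.mp ((Nat.Prime.coprime_iff_not_dvd Nat.prime_two).mpr hodd))

lemma even_not_unit (n : ℕ) (hn : 1 ≤ n) (x : ZMod (2^n)) (h : Even x) : ¬ IsUnit x := by
  obtain ⟨k, hk⟩ := h
  intro hu
  have h2 : IsUnit (2 : ZMod (2^n)) := isUnit_of_mul_isUnit_left (x := 2) (y := k)
    (by rw [show (2:ZMod (2^n)) * k = x by rw [hk]; ring]; exact hu)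
  have hc := (ZMod.isUnit_iff_coprime 2 (2^n)).mp (by exact_mod_cast h2)
  have hd : (2:ℕ) ∣ 2^n := dvd_pow_self 2 (by omega)
  have : (2:ℕ) ∣ Nat.gcd 2 (2^n) := Nat.dvd_gcd dvd_rfl hd
  rw [hc] at this
  exact absurd this (by norm_num)

/-- Every involution in `GL₂(ℤ/2ⁿ)` (other than the identity) whose diagonal entries are both
even is conjugate to the swap matrix `[[0,1],[1,0]]`. -/
theorem involution_even_diagonal_conjugate_swap
    (n : ℕ) (hn : 2 ≤ n) (A : GL (Fin 2) (ZMod (2 ^ n)))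
    (hA1 : A ≠ 1) (hA2 : A ^ 2 = 1)
    (hd0 : Even ((A : Matrix (Fin 2) (Fin 2) (ZMod (2 ^ n))) 0 0))
    (hd1 : Even ((A : Matrix (Fin 2) (Fin 2) (ZMod (2 ^ n))) 1 1)) :
    ∃ P : GL (Fin 2) (ZMod (2 ^ n)),
      ((P * A * P⁻¹ : GL (Fin 2) (ZMod (2 ^ n))) : Matrix (Fin 2) (Fin 2) (ZMod (2 ^ n))) =
        !![0, 1; 1, 0] := by
  set R := ZMod (2 ^ n) with hR
  set B : Matrix (Fin 2) (Fin 2) R := (A : Matrix (Fin 2) (Fin 2) R) with hB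
  set a := B 0 0; set b := B 0 1; set c := B 1 0; set d := B 1 1
  -- b is a unit
  have hdet : IsUnit B.det := (Matrix.isUnit_iff_isUnit_det _).mp A.isUnit
  have hdet2 : B.det = a * d - b * c := Matrix.det_fin_two B
  have hbc : ¬ Even (b * c) := by
    intro hev
    exact even_not_unit n (by omega) B.det (hdet2 ▸ Even.sub (hd0.mul_right d) hev) hdet
  have hb : IsUnit b := isUnit_of_mul_isUnit_left (unit_of_not_even n _ hbc)
  -- A² = 1 at the matrix level
  have hA2' : B * B = 1 := by
    have := congrArg (Units.val) hA2
    rwa [Units.val_pow_eq_pow_val, sq, Units.val_one] at this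
  have e00 : a * a + b * c = 1 := by
    have := congrFun (congrFun hA2' 0) 0
    simpa [Matrix.mul_apply, Fin.sum_univ_two] using this
  have e01 : a * b + b * d = 0 := by
    have := congrFun (congrFun hA2' 0) 1
    simpa [Matrix.mul_apply, Fin.sum_univ_two] using this
  -- the conjugating matrix
  set M : Matrix (Fin 2) (Fin 2) R := !![1, 0; a, b] with hM
  have hMdet : IsUnit M.det := by
    rw [Matrix.det_fin_two_of]; simpa using hb
  haveI : Invertible M := M.invertibleOfIsUnitDet hMdet
  refine ⟨unitOfInvertible M, ?_⟩
  have key : M * B = !![0, 1; 1, 0] * M := by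
    ext i j
    fin_cases i <;> fin_cases j <;>
      simp [hM, Matrix.mul_apply, Fin.sum_univ_two] <;>
      first
        | linear_combination e00 | linear_combination -e00
        | linear_combination e01 | linear_combination -e01
        | (have h : B 0 0 * B 0 1 + B 0 1 * B 1 1 = 0 := e01
           simp only [a, b, d] at h ⊢)
  calc ((unitOfInvertible M) * A * (unitOfInvertible M)⁻¹ : GL (Fin 2) R).val
      = M * B * ((unitOfInvertible M)⁻¹ : GL (Fin 2) R).val := by
        simp [Units.val_mul, hB]
    _ = !![0, 1; 1, 0] * (M * ((unitOfInvertible M)⁻¹ : GL (Fin 2) R).val) := by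
        rw [key, Matrix.mul_assoc]
    _ = !![0, 1; 1, 0] := by
        have : ((unitOfInvertible M : (Matrix (Fin 2) (Fin 2) R)ˣ) : Matrix (Fin 2) (Fin 2) R) * ((unitOfInvertible M)⁻¹ : (Matrix (Fin 2) (Fin 2) R)ˣ).val = 1 := by
          rw [← Units.val_mul, mul_inv_cancel, Units.val_one]
        rw [show ((unitOfInvertible M : (Matrix (Fin 2) (Fin 2) R)ˣ) : Matrix (Fin 2) (Fin 2) R) = M from rfl] at this
        rw [this, mul_one]
end

section
/- Let n ≥ 2 and let A = [[a,c],[b,d]] ∈ GL₂(Z/2^n) with A² = I and a, d both odd with a + d = 2q for some odd q ∈ Z/2^n. Then b, c ∈ {0, 2^{n-1}} and a² = 1 in Z/2^n, so a ∈ {±1, ±1 + 2^{n-1}}. -/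
-- auxiliary: 2*b = 0 in ZMod 2^n implies b = 0 or 2^(n-1)
lemma aux_two_mul_eq_zero (n : ℕ) (hn : 1 ≤ n) (b : ZMod (2 ^ n)) (h : 2 * b = 0) :
    b = 0 ∨ b = (2 ^ (n - 1) : ℕ) := by
  haveI : NeZero (2 ^ n) := ⟨pow_ne_zero _ two_ne_zero⟩
  have hb : ((2 * b.val : ℕ) : ZMod (2 ^ n)) = 0 := by
    push_cast [ZMod.natCast_zmod_val]; exact h
  rw [ZMod.natCast_eq_zero_iff] at hb
  have hsplit : 2 ^ n = 2 * 2 ^ (n - 1) := by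
    rw [← pow_succ']; congr 1; omega
  have hdvd : 2 ^ (n - 1) ∣ b.val := by
    rcases hb with ⟨k, hk⟩
    have hk' : 2 * b.val = 2 * (2 ^ (n - 1) * k) := by
      rw [hk, hsplit, mul_assoc]
    exact ⟨k, by omega⟩
  rcases hdvd with ⟨k, hk⟩
  have hlt : b.val < 2 ^ n := ZMod.val_lt b
  have hk2 : k < 2 := by
    by_contra hk2
    push_neg at hk2
    have : 2 * 2 ^ (n - 1) ≤ 2 ^ (n - 1) * k := by
      calc 2 * 2 ^ (n-1) = 2 ^ (n-1) * 2 := by ring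
      _ ≤ 2 ^ (n-1) * k := Nat.mul_le_mul_left _ hk2
    omega
  interval_cases k
  · left; have : b.val = 0 := by omega
    rw [← ZMod.natCast_zmod_val b, this, Nat.cast_zero]
  · right; rw [← ZMod.natCast_zmod_val b, hk]; push_cast; ring


-- auxiliary: odd elements of ZMod 2^n are units
lemma aux_odd_isUnit (n : ℕ) (q : ZMod (2 ^ n)) (h : ¬ Even q) : IsUnit q := by
  haveI : NeZero (2 ^ n) := ⟨pow_ne_zero _ two_ne_zero⟩
  have hv : ¬ Even q.val := by
    intro ⟨m, hm⟩
    apply h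
    refine ⟨(m : ZMod (2 ^ n)), ?_⟩
    rw [← ZMod.natCast_zmod_val q, hm]; push_cast; ring
  rw [← ZMod.natCast_zmod_val q, ZMod.isUnit_iff_coprime]
  exact Nat.Coprime.pow_right _ ((Nat.not_even_iff_odd.mp hv).coprime_two_right)

-- auxiliary: classification of square roots of 1 in ZMod 2^n
lemma aux_sq_eq_one (n : ℕ) (hn : 2 ≤ n) (a : ZMod (2 ^ n)) (ha : a ^ 2 = 1) :
    a = 1 ∨ a = -1 ∨ a = 1 + (2 ^ (n - 1) : ℕ) ∨ a = -1 + (2 ^ (n - 1) : ℕ) := by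
  haveI : NeZero (2 ^ n) := ⟨pow_ne_zero _ two_ne_zero⟩
  set x : ℤ := (a.val : ℤ) with hx
  have hax : ((x : ℤ) : ZMod (2 ^ n)) = a := by
    rw [hx]; push_cast [ZMod.natCast_zmod_val]; rfl
  have hdvd : ((2 : ℤ) ^ n) ∣ x ^ 2 - 1 := by
    have : ((x ^ 2 - 1 : ℤ) : ZMod (2 ^ n)) = 0 := by
      push_cast [hax, ha]; ring
    have h2 := (ZMod.intCast_zmod_eq_zero_iff_dvd _ _).mp this
    rwa [Nat.cast_pow, Nat.cast_ofNat] at h2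
  -- x is odd
  have hxodd : Odd x := by
    rcases Int.even_or_odd x with ⟨m, hm⟩ | hodd
    · exfalso
      have h2 : (2 : ℤ) ∣ x ^ 2 - 1 := dvd_trans (dvd_pow_self 2 (by omega)) hdvd
      have hexp : x ^ 2 - 1 = 4 * (m * m) - 1 := by rw [hm]; ring
      omega
    · exact hodd
  obtain ⟨u, hu⟩ := hxodd
  -- 2^(n-2) ∣ u * (u + 1)
  have hmain : ((2 : ℤ) ^ (n - 2)) ∣ u * (u + 1) := by
    have h4 : (4 : ℤ) * 2 ^ (n - 2) ∣ 4 * (u * (u + 1)) := by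
      have he : (2 : ℤ) ^ n = 4 * 2 ^ (n - 2) := by
        rw [show n = 2 + (n - 2) by omega, pow_add]; norm_num
      have he2 : x ^ 2 - 1 = 4 * (u * (u + 1)) := by rw [hu]; ring
      rw [← he, ← he2]; exact hdvd
    exact (mul_dvd_mul_iff_left (by norm_num : (4:ℤ) ≠ 0)).mp h4
  -- hence 2^(n-1) divides x - 1 or x + 1
  have hkey : ((2 : ℤ) ^ (n - 1)) ∣ x - 1 ∨ ((2 : ℤ) ^ (n - 1)) ∣ x + 1 := by
    have hpow : (2 : ℤ) ^ (n - 1) = 2 * 2 ^ (n - 2) := by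
      rw [show n - 1 = 1 + (n - 2) by omega, pow_add]; norm_num
    rcases Int.even_or_odd u with heven | huodd
    · left
      have hcop : IsCoprime ((2 : ℤ) ^ (n - 2)) (u + 1) :=
        IsCoprime.pow_left (by
          rw [Int.isCoprime_iff_gcd_eq_one]
          simpa [Int.gcd] using (Int.natAbs_odd.mpr heven.add_one).coprime_two_left)
      obtain ⟨t, ht⟩ := hcop.dvd_of_dvd_mul_right hmain
      exact ⟨t, by rw [hu, hpow]; linarith⟩
    · right
      have hcop : IsCoprime ((2 : ℤ) ^ (n - 2)) u :=
        IsCoprime.pow_left (by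
          rw [Int.isCoprime_iff_gcd_eq_one]
          simpa [Int.gcd] using (Int.natAbs_odd.mpr huodd).coprime_two_left)
      obtain ⟨t, ht⟩ := hcop.dvd_of_dvd_mul_left hmain
      exact ⟨t, by rw [hu, hpow]; linarith⟩
  have hzero : ((2 : ZMod (2 ^ n)) ^ (n - 1)) * 2 = 0 := by
    have : ((2 ^ n : ℕ) : ZMod (2 ^ n)) = 0 := ZMod.natCast_self _
    push_cast at this
    rw [← this, ← pow_succ]; congr 1; omega
  have hcast : ((2 : ℕ) ^ (n - 1) : ℕ) = ((2 : ZMod (2 ^ n)) ^ (n - 1) : ZMod (2 ^ n)) := by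
    push_cast; ring
  rcases hkey with ⟨t, ht⟩ | ⟨t, ht⟩
  · have hxeq : x = 1 + 2 ^ (n - 1) * t := by linarith
    have : a = 1 + (2 : ZMod (2 ^ n)) ^ (n - 1) * (t : ZMod (2 ^ n)) := by
      rw [← hax, hxeq]; push_cast; ring
    rcases Int.even_or_odd t with ⟨m, hm⟩ | ⟨m, hm⟩
    · left
      rw [this, hm]; push_cast; linear_combination (m : ZMod (2 ^ n)) * hzero
    · right; right; left
      rw [this, hm]; push_cast; linear_combination (m : ZMod (2 ^ n)) * hzero
  · have hxeq : x = -1 + 2 ^ (n - 1) * t := by linarith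
    have : a = -1 + (2 : ZMod (2 ^ n)) ^ (n - 1) * (t : ZMod (2 ^ n)) := by
      rw [← hax, hxeq]; push_cast; ring
    rcases Int.even_or_odd t with ⟨m, hm⟩ | ⟨m, hm⟩
    · right; left
      rw [this, hm]; push_cast; linear_combination (m : ZMod (2 ^ n)) * hzero
    · right; right; right
      rw [this, hm]; push_cast; linear_combination (m : ZMod (2 ^ n)) * hzero

/-- If `A = [[a,c],[b,d]] ∈ GL₂(ℤ/2ⁿ)` satisfies `A² = I` with `a, d` both odd and
`a + d = 2q` for some odd `q`, then `b, c ∈ {0, 2^{n-1}}`, `a² = 1`, and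
`a ∈ {±1, ±1 + 2^{n-1}}`. -/
theorem involution_odd_diagonal_sum_twice_odd
    (n : ℕ) (hn : 2 ≤ n) (A : GL (Fin 2) (ZMod (2 ^ n))) (hA2 : A ^ 2 = 1)
    (a b c d : ZMod (2 ^ n))
    (hm : (A : Matrix (Fin 2) (Fin 2) (ZMod (2 ^ n))) = !![a, c; b, d])
    (ha : ¬ Even a) (hd : ¬ Even d)
    (hq : ∃ q : ZMod (2 ^ n), ¬ Even q ∧ a + d = 2 * q) :
    (b = 0 ∨ b = (2 ^ (n - 1) : ℕ)) ∧ (c = 0 ∨ c = (2 ^ (n - 1) : ℕ)) ∧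
      a ^ 2 = 1 ∧
      (a = 1 ∨ a = -1 ∨ a = 1 + (2 ^ (n - 1) : ℕ) ∨ a = -1 + (2 ^ (n - 1) : ℕ)) := by
  haveI : NeZero (2 ^ n) := ⟨pow_ne_zero _ two_ne_zero⟩
  -- matrix squared
  have hM : (!![a, c; b, d] : Matrix (Fin 2) (Fin 2) (ZMod (2 ^ n))) * !![a, c; b, d] = 1 := by
    rw [← hm]
    have : ((A ^ 2 : GL (Fin 2) (ZMod (2 ^ n))) : Matrix (Fin 2) (Fin 2) (ZMod (2 ^ n))) = 1 := by
      rw [hA2]; rfl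
    rw [Units.val_pow_eq_pow_val, pow_two] at this
    exact this
  rw [Matrix.mul_fin_two] at hM
  have h00 : a * a + c * b = 1 := by
    have := congrFun (congrFun hM 0) 0; simpa using this
  have h10 : b * a + d * b = 0 := by
    have := congrFun (congrFun hM 1) 0; simpa using this
  have h01 : a * c + c * d = 0 := by
    have := congrFun (congrFun hM 0) 1; simpa using this
  -- derive 2b = 0 and 2c = 0
  obtain ⟨q, hqodd, hsum⟩ := hq
  have hqu : IsUnit q := aux_odd_isUnit n q hqodd
  have hb2 : 2 * b = 0 := by
    have : b * (2 * q) = 0 := by rw [← hsum]; linear_combination h10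
    have h2 : (2 * b) * q = 0 := by linear_combination this
    obtain ⟨qu, hqu'⟩ := hqu
    have := congrArg (· * (↑qu⁻¹ : ZMod (2 ^ n))) h2
    simpa [mul_assoc, ← hqu', zero_mul] using this
  have hc2 : 2 * c = 0 := by
    have : c * (2 * q) = 0 := by rw [← hsum]; linear_combination h01
    have h2 : (2 * c) * q = 0 := by linear_combination this
    obtain ⟨qu, hqu'⟩ := hqu
    have := congrArg (· * (↑qu⁻¹ : ZMod (2 ^ n))) h2
    simpa [mul_assoc, ← hqu', zero_mul] using this
  have hbcase := aux_two_mul_eq_zero n (by omega) b hb2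
  have hccase := aux_two_mul_eq_zero n (by omega) c hc2
  -- c * b = 0
  have hp0 : ((2 ^ (n - 1) : ℕ) : ZMod (2 ^ n)) * ((2 ^ (n - 1) : ℕ) : ZMod (2 ^ n)) = 0 := by
    rw [← Nat.cast_mul, ZMod.natCast_eq_zero_iff, ← pow_add]
    exact pow_dvd_pow 2 (by omega)
  have hcb : c * b = 0 := by
    rcases hbcase with rfl | rfl
    · rw [mul_zero]
    · rcases hccase with rfl | rfl
      · rw [zero_mul]
      · exact hp0
  have hsq : a ^ 2 = 1 := by rw [pow_two]; linear_combination h00 - hcb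
  exact ⟨hbcase, hccase, hsq, aux_sq_eq_one n hn a hsq⟩
end

section
/- For n ≥ 3, every matrix A ∈ GL₂(Z/2^n) with A² = I, A ≠ I, is conjugate to one of the 16 matrices: [[0,1],[1,0]]; the diagonal-block list [[-1,0],[0,-1]], [[1+2^{n-1},0],[0,1+2^{n-1}]], [[-1+2^{n-1},0],[0,-1+2^{n-1}]], [[1,0],[2^{n-1},1]], [[-1,0],[2^{n-1},-1]], [[1+2^{n-1},0],[2^{n-1},1+2^{n-1}]], [[-1+2^{n-1},0],[2^{n-1},-1+2^{n-1}]], [[1,0],[0,1+2^{n-1}]], [[-1,0],[0,-1+2^{n-1}]], [[1,2^{n-1}],[2^{n-1},1+2^{n-1}]], [[-1,2^{n-1}],[2^{n-1},-1+2^{n-1}]]; and [[1,0],[0,-1]], [[1+2^{n-1},0],[0,-1+2^{n-1}]], [[1,0],[0,-1+2^{n-1}]], [[1+2^{n-1},0],[0,-1]]. -/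
namespace Inv16

variable {n : ℕ}

abbrev R (n : ℕ) := ZMod (2^n)
abbrev M2 (n : ℕ) := Matrix (Fin 2) (Fin 2) (R n)

lemma two_dvd (hn : 1 ≤ n) : 2 ∣ 2^n := dvd_pow_self 2 (by omega)
lemma four_dvd (hn : 2 ≤ n) : (4:ℕ) ∣ 2^n := by
  have h : (4:ℕ) = 2^2 := rfl
  rw [h]; exact pow_dvd_pow 2 hn

instance (n : ℕ) : NeZero (2^n) := ⟨by positivity⟩

noncomputable def φ (hn : 1 ≤ n) : R n →+* ZMod 2 := ZMod.castHom (two_dvd hn) (ZMod 2)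
noncomputable def ψ (hn : 2 ≤ n) : R n →+* ZMod 4 := ZMod.castHom (four_dvd hn) (ZMod 4)

lemma φ_apply (hn : 1 ≤ n) (x : R n) : φ hn x = ((x.val : ℕ) : ZMod 2) := by
  rw [φ, ZMod.castHom_apply]; exact (ZMod.natCast_val x).symm

lemma ψ_apply (hn : 2 ≤ n) (x : R n) : ψ hn x = ((x.val : ℕ) : ZMod 4) := by
  rw [ψ, ZMod.castHom_apply]; exact (ZMod.natCast_val x).symm

lemma φ_eq_zero_iff (hn : 1 ≤ n) (x : R n) : φ hn x = 0 ↔ 2 ∣ x.val := by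
  rw [φ_apply, ZMod.natCast_eq_zero_iff]

lemma ψ_eq_zero_iff (hn : 2 ≤ n) (x : R n) : ψ hn x = 0 ↔ 4 ∣ x.val := by
  rw [ψ_apply, ZMod.natCast_eq_zero_iff]

lemma natCast_val_self (x : R n) : ((x.val : ℕ) : R n) = x := by
  rw [ZMod.natCast_val, ZMod.cast_id]

noncomputable def half (x : R n) : R n := ((x.val / 2 : ℕ) : R n)
noncomputable def quarter (x : R n) : R n := ((x.val / 4 : ℕ) : R n)

lemma half_spec {x : R n} (h : 2 ∣ x.val) : 2 * half x = x := by
  have h2 : ((2 * (x.val / 2) : ℕ) : R n) = ((x.val : ℕ) : R n) := by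
    congr 1; omega
  rw [half]; push_cast at h2 ⊢
  rw [h2, natCast_val_self]

lemma quarter_spec {x : R n} (h : 4 ∣ x.val) : 4 * quarter x = x := by
  have h2 : ((4 * (x.val / 4) : ℕ) : R n) = ((x.val : ℕ) : R n) := by
    congr 1; omega
  rw [quarter]; push_cast at h2 ⊢
  rw [h2, natCast_val_self]

lemma half_val {x : R n} : (half x).val = x.val / 2 := by
  rw [half, ZMod.val_cast_of_lt]
  exact lt_of_le_of_lt (Nat.div_le_self _ _) x.val_lt

lemma isUnit_of_odd (hn : 1 ≤ n) {x : R n} (h : φ hn x ≠ 0) : IsUnit x := by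
  rw [Ne, φ_eq_zero_iff hn] at h
  have h2 : x.val.Coprime 2 := (Nat.coprime_comm).1 ((Nat.prime_two.coprime_iff_not_dvd).2 h)
  have h3 : IsUnit ((x.val : ℕ) : R n) := (ZMod.isUnit_iff_coprime _ _).2 (Nat.Coprime.pow_right _ h2)
  rwa [natCast_val_self] at h3

lemma two_torsion (hn : 1 ≤ n) {x : R n} (h : 2 * x = 0) : x = 0 ∨ x = ((2^(n-1) : ℕ) : R n) := by
  have hx : ((2 * x.val : ℕ) : R n) = 0 := by push_cast; rw [natCast_val_self]; exact h
  rw [ZMod.natCast_eq_zero_iff] at hx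
  have hpow : (2:ℕ)^n = 2 * 2^(n-1) := by
    conv_lhs => rw [show n = 1 + (n-1) by omega]
    ring
  have hd : 2^(n-1) ∣ x.val := by
    obtain ⟨k, hk⟩ := hx
    refine ⟨k, ?_⟩
    have h2 : 2 * x.val = 2 * (2^(n-1) * k) := by rw [hk, hpow]; ring
    omega
  obtain ⟨k, hk⟩ := hd
  have hklt : k < 2 := by
    by_contra hc
    have h1 : 2^(n-1)*k < 2*2^(n-1) := by rw [← hpow, ← hk]; exact x.val_lt
    nlinarith [Nat.le_of_not_lt hc, pow_pos (show 0 < 2 by norm_num) (n-1)]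
  interval_cases k
  · left; rw [← natCast_val_self (x := x), hk]; simp
  · right; rw [← natCast_val_self (x := x), hk]; norm_num

lemma four_torsion_even (hn : 3 ≤ n) {x : R n} (h : 4 * x = 0) : 2 ∣ x.val := by
  have hx : ((4 * x.val : ℕ) : R n) = 0 := by push_cast; rw [natCast_val_self]; exact h
  rw [ZMod.natCast_eq_zero_iff] at hx
  have hpow : (2:ℕ)^n = 4 * 2^(n-2) := by
    conv_lhs => rw [show n = 2 + (n-2) by omega]
    rw [pow_add]; norm_num
  have hd : 2^(n-2) ∣ x.val := by
    obtain ⟨k, hk⟩ := hx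
    refine ⟨k, ?_⟩
    have h2 : 4 * x.val = 4 * (2^(n-2) * k) := by rw [hk, hpow]; ring
    omega
  exact dvd_trans (dvd_pow_self 2 (by omega)) hd

lemma c_mul_even (hn : 1 ≤ n) {x : R n} (h : 2 ∣ x.val) :
    ((2^(n-1) : ℕ) : R n) * x = 0 := by
  rw [← half_spec h, ← mul_assoc]
  have h2 : ((2^(n-1) : ℕ) : R n) * 2 = 0 := by
    have e1 : ((2^(n-1) : ℕ) : R n) * 2 = ((2^(n-1) * 2 : ℕ) : R n) := by push_cast; ring
    rw [e1, show (2:ℕ)^(n-1) * 2 = 2^n by conv_rhs => rw [show n = (n-1)+1 by omega, pow_succ]]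
    exact ZMod.natCast_self _
  rw [h2, zero_mul]

lemma c_mul_congr (hn : 1 ≤ n) {x y : R n} (h : φ hn x = φ hn y) :
    ((2^(n-1) : ℕ) : R n) * x = ((2^(n-1) : ℕ) : R n) * y := by
  have h2 : ((2^(n-1) : ℕ) : R n) * (x - y) = 0 := by
    apply c_mul_even hn
    rw [← φ_eq_zero_iff hn, map_sub, h, sub_self]
  linear_combination h2

lemma c_add_c (hn : 1 ≤ n) : ((2^(n-1) : ℕ) : R n) + ((2^(n-1) : ℕ) : R n) = 0 := by
  rw [← Nat.cast_add, show (2:ℕ)^(n-1) + 2^(n-1) = 2^n by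
    conv_rhs => rw [show n = (n-1)+1 by omega, pow_succ]
    ring]
  exact ZMod.natCast_self _

lemma c_ne_zero (hn : 1 ≤ n) : ((2^(n-1) : ℕ) : R n) ≠ 0 := by
  intro h
  have hv : ((2^(n-1) : ℕ) : R n).val = 2^(n-1) :=
    ZMod.val_cast_of_lt (Nat.pow_lt_pow_right (by norm_num) (by omega))
  rw [h, ZMod.val_zero] at hv
  exact (pow_pos (by norm_num : (0:ℕ) < 2) (n-1)).ne' hv.symm

lemma val_odd_of_isUnit (hn : 1 ≤ n) {u : R n} (hu : IsUnit u) : ¬ 2 ∣ u.val := by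
  intro h2
  have hco : IsUnit ((u.val : ℕ) : R n) := by rwa [natCast_val_self]
  rw [ZMod.isUnit_iff_coprime] at hco
  have hg : 2 ∣ Nat.gcd u.val (2^n) := Nat.dvd_gcd h2 (dvd_pow_self 2 (by omega))
  rw [hco] at hg; omega

lemma int_solve : ∀ m : ℕ, ∀ u b c : ℤ, Odd u → ∃ z : ℤ, (2^m : ℤ) ∣ u*z + 4*b*z^2 - c := by
  intro m
  induction m with
  | zero => intro u b c _; exact ⟨0, by simp⟩
  | succ m ih =>
    intro u b c hu
    obtain ⟨z, k, hk⟩ := ih u b c hu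
    refine ⟨z + 2^m * k, ?_⟩
    obtain ⟨j, hj⟩ := hu
    have h3 : u*(z + 2^m*k) + 4*b*(z + 2^m*k)^2 - c =
        2^m * k + u*(2^m*k) + 4*b*(2*z*(2^m*k) + (2^m*k)^2) := by linear_combination hk
    rw [h3]
    have h1 : (2:ℤ)^(m+1) ∣ 2^m*k + u*(2^m*k) := ⟨k*(j+1), by linear_combination (2^m*k)*hj⟩
    have h2 : (2:ℤ)^(m+1) ∣ 4*b*(2*z*(2^m*k) + (2^m*k)^2) :=
      ⟨b*(4*z*k) + b*(2^(m+1)*k^2), by ring⟩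
    exact dvd_add h1 h2

lemma solve_quad (hn : 1 ≤ n) {u : R n} (hu : IsUnit u) (b c : R n) :
    ∃ z : R n, u*z + 4*(b*z^2) = c := by
  have hodd : Odd (u.val : ℤ) := by
    have h2 := val_odd_of_isUnit hn hu
    have : Odd u.val := Nat.odd_iff.2 (by omega)
    exact_mod_cast this
  obtain ⟨z, hz⟩ := int_solve n (u.val) (b.val) (c.val) hodd
  refine ⟨(z : R n), ?_⟩
  have h0 : (((u.val : ℤ)*z + 4*(b.val : ℤ)*z^2 - (c.val : ℤ) : ℤ) : R n) = 0 := by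
    rw [ZMod.intCast_zmod_eq_zero_iff_dvd]
    exact_mod_cast hz
  push_cast at h0
  rw [ZMod.natCast_val, ZMod.cast_id, ZMod.natCast_val, ZMod.cast_id, ZMod.natCast_val, ZMod.cast_id] at h0
  linear_combination h0


lemma two_pow_n (hn : 1 ≤ n) : ((2:R n))^n = 0 := by
  exact_mod_cast ZMod.natCast_self (2^n)

lemma two_pow_split (hn : 1 ≤ n) : ((2:R n))^(n-1) * 2 = 0 := by
  rw [← pow_succ, show n-1+1 = n by omega]; exact two_pow_n hn

lemma sqrt_one (hn : 3 ≤ n) (x : R n) (hx : x^2 = 1) :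
    x = 1 ∨ x = -1 ∨ x = 1 + ((2^(n-1):ℕ) : R n) ∨ x = -1 + ((2^(n-1):ℕ) : R n) := by
  have hodd : ¬ 2 ∣ x.val :=
    val_odd_of_isUnit (by omega) (IsUnit.of_mul_eq_one (a := x) x (by linear_combination hx))
  obtain ⟨t, ht⟩ : ∃ t, x.val = 2*t + 1 := ⟨x.val/2, by omega⟩
  have hdvd : (2:ℤ)^n ∣ ((x.val : ℤ)^2 - 1) := by
    have h5 : (((x.val : ℤ)^2 - 1 : ℤ) : R n) = 0 := by
      push_cast
      rw [ZMod.natCast_val, ZMod.cast_id]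
      linear_combination hx
    rw [ZMod.intCast_zmod_eq_zero_iff_dvd] at h5
    exact_mod_cast h5
  have hfac : (2:ℤ)^n ∣ 4 * ((t:ℤ) * ((t:ℤ)+1)) := by
    have h1 : (x.val : ℤ) = 2*(t:ℤ)+1 := by exact_mod_cast ht
    have h2 : ((x.val : ℤ)^2 - 1) = 4 * ((t:ℤ) * ((t:ℤ)+1)) := by rw [h1]; ring
    rwa [h2] at hdvd
  have hn2 : (2:ℤ)^n = 4 * 2^(n-2) := by
    conv_lhs => rw [show n = 2 + (n-2) by omega]
    rw [pow_add]; norm_num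
  have hdvdZ : (2:ℤ)^(n-2) ∣ ((t:ℤ) * ((t:ℤ)+1)) := by
    rw [hn2] at hfac
    exact (mul_dvd_mul_iff_left (by norm_num : (4:ℤ) ≠ 0)).1 hfac
  have hdvdN : 2^(n-2) ∣ t * (t+1) := by
    have h0 : ((2^(n-2) : ℕ) : ℤ) ∣ ((t*(t+1) : ℕ) : ℤ) := by push_cast; exact_mod_cast hdvdZ
    exact_mod_cast h0
  have hx' : x = ((2*t+1 : ℕ) : R n) := by rw [← ht, ZMod.natCast_val, ZMod.cast_id]
  have hzs := two_pow_split (show 1 ≤ n by omega)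
  rcases Nat.even_or_odd t with he | ho
  · have hcop : Nat.Coprime (2^(n-2)) (t+1) :=
      Nat.Coprime.pow_left _ ((Nat.prime_two.coprime_iff_not_dvd).2 (by
        obtain ⟨r, hr⟩ := he; omega))
    obtain ⟨s, hs⟩ := hcop.dvd_of_dvd_mul_right hdvdN
    have hxs : x = 1 + (2:R n)^(n-1) * (s : R n) := by
      rw [hx', hs]
      push_cast
      rw [show (2:R n) * ((2:R n)^(n-2) * (s:R n)) = (2:R n)^(n-1) * s by
        rw [show n-1 = 1+(n-2) by omega, pow_add]; ring]
      ring
    rcases Nat.even_or_odd s with ⟨r, hr⟩ | ⟨r, hr⟩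
    · left
      rw [hxs, hr]; push_cast
      linear_combination ((r : R n)) * hzs
    · right; right; left
      rw [hxs, hr]; push_cast
      linear_combination ((r : R n)) * hzs
  · have hcop : Nat.Coprime (2^(n-2)) t :=
      Nat.Coprime.pow_left _ ((Nat.prime_two.coprime_iff_not_dvd).2 (by
        obtain ⟨r, hr⟩ := ho; omega))
    obtain ⟨s, hs⟩ := hcop.dvd_of_dvd_mul_left (by rwa [mul_comm] at hdvdN)
    have hxs : x = -1 + (2:R n)^(n-1) * (s : R n) := by
      have h1 : ((2*t+1 : ℕ) : R n) = 2*((t+1 : ℕ) : R n) - 1 := by push_cast; ring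
      rw [hx', h1, hs]
      push_cast
      rw [show (2:R n) * ((2:R n)^(n-2) * (s:R n)) = (2:R n)^(n-1) * s by
        rw [show n-1 = 1+(n-2) by omega, pow_add]; ring]
      ring
    rcases Nat.even_or_odd s with ⟨r, hr⟩ | ⟨r, hr⟩
    · right; left
      rw [hxs, hr]; push_cast
      linear_combination ((r : R n)) * hzs
    · right; right; right
      rw [hxs, hr]; push_cast
      linear_combination ((r : R n)) * hzs

set_option maxRecDepth 40000 in
lemma classify_idem : ∀ a b c d : ZMod 2,
    (a*a + b*c = a ∧ a*b+b*d = b ∧ c*a+d*c = c ∧ c*b+d*d = d) →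
    (a=0∧b=0∧c=0∧d=0) ∨ (a=1∧b=0∧c=0∧d=1) ∨
    ∃ p q r s : ZMod 2, p*s-q*r = 1 ∧
      (p*a+q*c = 0 ∧ p*b+q*d = 0 ∧ r*a+s*c = r ∧ r*b+s*d = s) := by decide

set_option maxRecDepth 100000 in
lemma classify₅ : ∀ a b c d : ZMod 2, ¬(a=0∧b=0∧c=0∧d=0) →
    ∃ p q r s : ZMod 2, p*s - q*r = 1 ∧
    (  (p*a+q*c = p ∧ p*b+q*d = q ∧ r*a+s*c = r ∧ r*b+s*d = s)
     ∨ (p*a+q*c = 0 ∧ p*b+q*d = 0 ∧ r*a+s*c = p ∧ r*b+s*d = q)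
     ∨ (p*a+q*c = p ∧ p*b+q*d = q ∧ r*a+s*c = p+r ∧ r*b+s*d = q+s)
     ∨ (p*a+q*c = 0 ∧ p*b+q*d = 0 ∧ r*a+s*c = r ∧ r*b+s*d = s)
     ∨ (p*a+q*c = r ∧ p*b+q*d = s ∧ r*a+s*c = p+r ∧ r*b+s*d = q+s)) := by decide

set_option maxRecDepth 40000 in
lemma classify_swap : ∀ a b c d : ZMod 2,
    (a*a+b*c = 1 ∧ a*b+b*d = 0 ∧ c*a+d*c = 0 ∧ c*b+d*d = 1) →
    ¬(a=1∧b=0∧c=0∧d=1) → ∃ x y : ZMod 2, x*(c*x+d*y) - y*(a*x+b*y) = 1 := by decide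

lemma conjA {K : Type*} [CommRing K] (A : (Matrix (Fin 2) (Fin 2) K)ˣ)
    {Q S : Matrix (Fin 2) (Fin 2) K} (hQ : IsUnit Q) (h : Q * A.val = S * Q) :
    ∃ P : (Matrix (Fin 2) (Fin 2) K)ˣ, ((P * A * P⁻¹ : _ˣ) : Matrix (Fin 2) (Fin 2) K) = S := by
  refine ⟨hQ.unit, ?_⟩
  have hs : (hQ.unit).val = Q := hQ.unit_spec
  have hinv : Q * (hQ.unit⁻¹).val = 1 := by have h0 := hQ.unit.mul_inv; rwa [hs] at h0
  calc (hQ.unit * A * hQ.unit⁻¹).val = Q * A.val * (hQ.unit⁻¹).val := by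
        rw [Units.val_mul, Units.val_mul, hs]
    _ = S * (Q * (hQ.unit⁻¹).val) := by rw [h, mul_assoc]
    _ = S := by rw [hinv, mul_one]

lemma conjB {K : Type*} [CommRing K] (A : (Matrix (Fin 2) (Fin 2) K)ˣ)
    {Q S : Matrix (Fin 2) (Fin 2) K} (hQ : IsUnit Q) (h : A.val * Q = Q * S) :
    ∃ P : (Matrix (Fin 2) (Fin 2) K)ˣ, ((P * A * P⁻¹ : _ˣ) : Matrix (Fin 2) (Fin 2) K) = S := by
  refine ⟨hQ.unit⁻¹, ?_⟩
  have hs : (hQ.unit).val = Q := hQ.unit_spec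
  have hinv : (hQ.unit⁻¹).val * Q = 1 := by have h0 := hQ.unit.inv_mul; rwa [hs] at h0
  calc (hQ.unit⁻¹ * A * hQ.unit⁻¹⁻¹).val
      = (hQ.unit⁻¹).val * (A.val * Q) := by
        rw [inv_inv, Units.val_mul, Units.val_mul, hs, mul_assoc]
    _ = ((hQ.unit⁻¹).val * Q) * S := by rw [h, mul_assoc]
    _ = S := by rw [hinv, one_mul]

lemma isUnit_of_det_map (hn : 1 ≤ n) (M : M2 n) (h : (M.map ⇑(φ hn)).det ≠ 0) : IsUnit M := by
  apply (Matrix.isUnit_iff_isUnit_det M).2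
  apply isUnit_of_odd hn
  rwa [RingHom.map_det]

noncomputable def liftF (x : ZMod 2) : R n := ((x.val : ℕ) : R n)

lemma φ_liftF (hn : 1 ≤ n) (x : ZMod 2) : φ hn (liftF x) = x := by
  have hlt : x.val < 2^n := lt_of_lt_of_le x.val_lt (Nat.pow_le_pow_right (by norm_num) hn |>.trans_eq' (by norm_num))
  rw [φ_apply, liftF, ZMod.val_cast_of_lt hlt, ZMod.natCast_val, ZMod.cast_id]

lemma ψ_double_even (hn : 2 ≤ n) (x : R n) (hx : 2 ∣ x.val) : ψ hn (2 * x) = 0 := by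
  have h1 : (2:R n) * x = ((2 * x.val : ℕ) : R n) := by push_cast; rw [natCast_val_self]
  rw [h1, map_natCast, ZMod.natCast_eq_zero_iff]
  omega

lemma ψ_double_odd (hn : 2 ≤ n) (x : R n) (hx : ¬ 2 ∣ x.val) : ψ hn (2 * x) = 2 := by
  have h1 : (2:R n) * x = ((2 * x.val : ℕ) : R n) := by push_cast; rw [natCast_val_self]
  rw [h1, map_natCast, show ((2 * x.val : ℕ) : ZMod 4) = (((2 * x.val) % 4 : ℕ) : ZMod 4) from (ZMod.natCast_mod _ 4).symm,
    show (2 * x.val) % 4 = 2 by omega]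
  norm_num

lemma ψ_c (hn : 3 ≤ n) (h2 : 2 ≤ n) : ψ h2 ((2^(n-1) : ℕ) : R n) = 0 := by
  rw [map_natCast, ZMod.natCast_eq_zero_iff]
  have : (4:ℕ) = 2^2 := rfl
  rw [this]; exact pow_dvd_pow 2 (by omega)


set_option maxHeartbeats 2000000 in
lemma core (hn : 3 ≤ n) (A : (M2 n)ˣ)
    (h4 : ∀ i j, ψ (show 2 ≤ n by omega) ((A.val - 1) i j) = 0)
    (hA2 : A.val * A.val = 1) (hne : A.val ≠ 1) :
    ∃ P : (M2 n)ˣ, ∃ T ∈ ([!![1,0;0,1], !![0,0;1,0], !![1,0;1,1], !![0,0;0,1], !![0,1;1,1]] :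
        List (M2 n)),
      ((P * A * P⁻¹ : (M2 n)ˣ) : M2 n) = 1 + ((2^(n-1) : ℕ) : R n) • T := by
  have h1n : 1 ≤ n := by omega
  have h2n : 2 ≤ n := by omega
  set cc : R n := ((2^(n-1) : ℕ) : R n) with hcc
  clear_value cc
  set M : M2 n := A.val - 1 with hMdef
  clear_value M
  have hA : A.val = 1 + M := by rw [hMdef]; abel
  have hMM : M * M + (2:R n) • M = 0 := by
    have e : (1 + M) * (1 + M) = 1 + (M * M + (2:R n) • M) := by
      rw [two_smul]; noncomm_ring
    rw [hA, e] at hA2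
    have h0 : (1:M2 n) + (M * M + (2:R n) • M) = 1 + 0 := by rw [add_zero]; exact hA2
    exact add_left_cancel h0
  set C : M2 n := Matrix.of (fun i j => quarter (M i j)) with hCdef
  clear_value C
  have hMC : M = (4 : R n) • C := by
    ext i j
    rw [Matrix.smul_apply, hCdef, Matrix.of_apply, smul_eq_mul,
      quarter_spec ((ψ_eq_zero_iff h2n _).1 (h4 i j))]
  have h16 : (16:R n) • (C * C) + (8:R n) • C = 0 := by
    have h := hMM
    rw [hMC, smul_mul_assoc, mul_smul_comm, smul_smul, smul_smul,
      show ((4:R n)*4) = 16 by norm_num, show ((2:R n)*4) = 8 by norm_num] at h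
    exact h
  set W : M2 n := 1 + (2:R n) • C with hWdef
  clear_value W
  have hφ2 : φ h1n 2 = 0 := by rw [map_ofNat]; decide
  have hWmap : W.map ⇑(φ h1n) = 1 := by
    ext i j
    rw [Matrix.map_apply, hWdef, Matrix.add_apply, Matrix.smul_apply, smul_eq_mul, map_add,
      map_mul, hφ2, zero_mul, add_zero]
    by_cases hij : i = j
    · rw [hij, Matrix.one_apply_eq, Matrix.one_apply_eq, map_one]
    · rw [Matrix.one_apply_ne hij, Matrix.one_apply_ne hij, map_zero]
  have hWu : IsUnit W := isUnit_of_det_map h1n W (by rw [hWmap, Matrix.det_one]; exact one_ne_zero)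
  have h8C : (8:R n) • C = 0 := by
    have hCW : C * W = C + (2:R n) • (C * C) := by rw [hWdef, mul_add, mul_one, mul_smul_comm]
    have h1 : ((8:R n) • C) * W = 0 := by
      rw [smul_mul_assoc, hCW, smul_add, smul_smul, show ((8:R n)*2) = 16 by norm_num, add_comm]
      exact h16
    have hWinv : W * (hWu.unit⁻¹).val = 1 := by
      have h0 := hWu.unit.mul_inv; rwa [hWu.unit_spec] at h0
    calc (8:R n) • C = ((8:R n) • C) * (W * (hWu.unit⁻¹).val) := by rw [hWinv, mul_one]
      _ = (((8:R n) • C) * W) * (hWu.unit⁻¹).val := by rw [mul_assoc]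
      _ = 0 := by rw [h1, zero_mul]
  have h2M : (2:R n) • M = 0 := by
    rw [hMC, smul_smul, show ((2:R n)*4) = 8 by norm_num]; exact h8C
  have htor : ∀ i j, M i j = 0 ∨ M i j = cc := by
    intro i j
    rw [hcc]
    apply two_torsion h1n
    have h5 : ((2:R n) • M) i j = 0 := by rw [h2M]; simp
    rw [Matrix.smul_apply, smul_eq_mul] at h5
    exact h5
  set D : M2 n := M.map (fun x => if x = 0 then (0:R n) else 1) with hDdef
  clear_value D
  have hMD : M = cc • D := by
    ext i j
    rw [Matrix.smul_apply, hDdef, Matrix.map_apply, smul_eq_mul]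
    rcases htor i j with h | h
    · rw [h, if_pos rfl, mul_zero]
    · rw [h, if_neg (by rw [hcc]; exact c_ne_zero h1n), mul_one]
  have hDne : ∃ i j, D i j = 1 := by
    have hM0 : M ≠ 0 := by
      intro h0; apply hne; rw [hA, h0, add_zero]
    have hex : ∃ i j, M i j ≠ 0 := by
      by_contra hno; push_neg at hno; apply hM0; ext i j; rw [hno i j]; simp
    obtain ⟨i, j, hij⟩ := hex
    refine ⟨i, j, ?_⟩
    rw [hDdef, Matrix.map_apply, if_neg hij]
  obtain ⟨p, q, r, s, hdet, hcases⟩ := classify₅ (φ h1n (D 0 0)) (φ h1n (D 0 1))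
      (φ h1n (D 1 0)) (φ h1n (D 1 1)) (by
    intro hall
    obtain ⟨i, j, hij⟩ := hDne
    have h1 : φ h1n (D i j) = 1 := by rw [hij, map_one]
    have h0 : φ h1n (D i j) = 0 := by
      fin_cases i <;> fin_cases j <;>
        [exact hall.1; exact hall.2.1; exact hall.2.2.1; exact hall.2.2.2]
    rw [h0] at h1; exact zero_ne_one h1)
  set Pl : M2 n := !![liftF p, liftF q; liftF r, liftF s] with hPldef
  clear_value Pl
  have hPlmap : Pl.map ⇑(φ h1n) = !![p, q; r, s] := by
    ext i j; fin_cases i <;> fin_cases j <;>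
      simp [hPldef, Matrix.map_apply, φ_liftF h1n]
  have hPlu : IsUnit Pl := by
    apply isUnit_of_det_map h1n
    rw [hPlmap, Matrix.det_fin_two_of]
    intro h0; rw [hdet] at h0; exact one_ne_zero h0
  have finish : ∀ T : M2 n, (∀ i j, φ h1n ((Pl * D) i j) = φ h1n ((T * Pl) i j)) →
      ∃ P : (M2 n)ˣ, ((P * A * P⁻¹ : (M2 n)ˣ) : M2 n) = 1 + cc • T := by
    intro T hφeq
    have hkey : cc • (Pl * D) = cc • (T * Pl) := by
      ext i j
      rw [Matrix.smul_apply, Matrix.smul_apply, smul_eq_mul, smul_eq_mul, hcc]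
      exact c_mul_congr h1n (hφeq i j)
    apply conjA A hPlu
    calc Pl * A.val = Pl + cc • (Pl * D) := by rw [hA, hMD, mul_add, mul_one, mul_smul_comm]
      _ = Pl + cc • (T * Pl) := by rw [hkey]
      _ = (1 + cc • T) * Pl := by rw [add_mul, one_mul, smul_mul_assoc]
  rcases hcases with h | h | h | h | h
  · -- T = 1
    obtain ⟨P, hP⟩ := finish !![(1:R n),0;0,1] (by
      have hTbar : (!![(1:R n),0;0,1]).map ⇑(φ h1n) = !![(1:ZMod 2),0;0,1] := by
        ext i j; fin_cases i <;> fin_cases j <;> simp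
      have hmat : !![p,q;r,s] * (D.map ⇑(φ h1n)) = !![(1:ZMod 2),0;0,1] * !![p,q;r,s] := by
        rw [Matrix.eta_fin_two (D.map ⇑(φ h1n))]
        ext i j
        fin_cases i <;> fin_cases j <;>
          simp [Matrix.mul_apply, Fin.sum_univ_two, Matrix.map_apply] <;>
          first
          | linear_combination h.1
          | linear_combination h.2.1
          | linear_combination h.2.2.1
          | linear_combination h.2.2.2
      intro i j
      have e1 : (Pl * D).map ⇑(φ h1n) = !![p,q;r,s] * (D.map ⇑(φ h1n)) := by
        rw [Matrix.map_mul, hPlmap]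
      have e2 : (!![(1:R n),0;0,1] * Pl).map ⇑(φ h1n) = !![(1:ZMod 2),0;0,1] * !![p,q;r,s] := by
        rw [Matrix.map_mul, hPlmap, hTbar]
      exact congrFun (congrFun (e1.trans (hmat.trans e2.symm)) i) j)
    exact ⟨P, !![(1:R n),0;0,1], List.mem_cons_self, hP⟩
  · obtain ⟨P, hP⟩ := finish !![(0:R n),0;1,0] (by
      have hTbar : (!![(0:R n),0;1,0]).map ⇑(φ h1n) = !![(0:ZMod 2),0;1,0] := by
        ext i j; fin_cases i <;> fin_cases j <;> simp
      have hmat : !![p,q;r,s] * (D.map ⇑(φ h1n)) = !![(0:ZMod 2),0;1,0] * !![p,q;r,s] := by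
        rw [Matrix.eta_fin_two (D.map ⇑(φ h1n))]
        ext i j
        fin_cases i <;> fin_cases j <;>
          simp [Matrix.mul_apply, Fin.sum_univ_two, Matrix.map_apply] <;>
          first
          | linear_combination h.1
          | linear_combination h.2.1
          | linear_combination h.2.2.1
          | linear_combination h.2.2.2
      intro i j
      have e1 : (Pl * D).map ⇑(φ h1n) = !![p,q;r,s] * (D.map ⇑(φ h1n)) := by
        rw [Matrix.map_mul, hPlmap]
      have e2 : (!![(0:R n),0;1,0] * Pl).map ⇑(φ h1n) = !![(0:ZMod 2),0;1,0] * !![p,q;r,s] := by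
        rw [Matrix.map_mul, hPlmap, hTbar]
      exact congrFun (congrFun (e1.trans (hmat.trans e2.symm)) i) j)
    exact ⟨P, !![(0:R n),0;1,0], List.mem_cons_of_mem _ (List.mem_cons_self), hP⟩
  · obtain ⟨P, hP⟩ := finish !![(1:R n),0;1,1] (by
      have hTbar : (!![(1:R n),0;1,1]).map ⇑(φ h1n) = !![(1:ZMod 2),0;1,1] := by
        ext i j; fin_cases i <;> fin_cases j <;> simp
      have hmat : !![p,q;r,s] * (D.map ⇑(φ h1n)) = !![(1:ZMod 2),0;1,1] * !![p,q;r,s] := by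
        rw [Matrix.eta_fin_two (D.map ⇑(φ h1n))]
        ext i j
        fin_cases i <;> fin_cases j <;>
          simp [Matrix.mul_apply, Fin.sum_univ_two, Matrix.map_apply] <;>
          first
          | linear_combination h.1
          | linear_combination h.2.1
          | linear_combination h.2.2.1
          | linear_combination h.2.2.2
      intro i j
      have e1 : (Pl * D).map ⇑(φ h1n) = !![p,q;r,s] * (D.map ⇑(φ h1n)) := by
        rw [Matrix.map_mul, hPlmap]
      have e2 : (!![(1:R n),0;1,1] * Pl).map ⇑(φ h1n) = !![(1:ZMod 2),0;1,1] * !![p,q;r,s] := by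
        rw [Matrix.map_mul, hPlmap, hTbar]
      exact congrFun (congrFun (e1.trans (hmat.trans e2.symm)) i) j)
    exact ⟨P, !![(1:R n),0;1,1], List.mem_cons_of_mem _ (List.mem_cons_of_mem _ (List.mem_cons_self)), hP⟩
  · obtain ⟨P, hP⟩ := finish !![(0:R n),0;0,1] (by
      have hTbar : (!![(0:R n),0;0,1]).map ⇑(φ h1n) = !![(0:ZMod 2),0;0,1] := by
        ext i j; fin_cases i <;> fin_cases j <;> simp
      have hmat : !![p,q;r,s] * (D.map ⇑(φ h1n)) = !![(0:ZMod 2),0;0,1] * !![p,q;r,s] := by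
        rw [Matrix.eta_fin_two (D.map ⇑(φ h1n))]
        ext i j
        fin_cases i <;> fin_cases j <;>
          simp [Matrix.mul_apply, Fin.sum_univ_two, Matrix.map_apply] <;>
          first
          | linear_combination h.1
          | linear_combination h.2.1
          | linear_combination h.2.2.1
          | linear_combination h.2.2.2
      intro i j
      have e1 : (Pl * D).map ⇑(φ h1n) = !![p,q;r,s] * (D.map ⇑(φ h1n)) := by
        rw [Matrix.map_mul, hPlmap]
      have e2 : (!![(0:R n),0;0,1] * Pl).map ⇑(φ h1n) = !![(0:ZMod 2),0;0,1] * !![p,q;r,s] := by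
        rw [Matrix.map_mul, hPlmap, hTbar]
      exact congrFun (congrFun (e1.trans (hmat.trans e2.symm)) i) j)
    exact ⟨P, !![(0:R n),0;0,1], List.mem_cons_of_mem _ (List.mem_cons_of_mem _ (List.mem_cons_of_mem _ (List.mem_cons_self))), hP⟩
  · obtain ⟨P, hP⟩ := finish !![(0:R n),1;1,1] (by
      have hTbar : (!![(0:R n),1;1,1]).map ⇑(φ h1n) = !![(0:ZMod 2),1;1,1] := by
        ext i j; fin_cases i <;> fin_cases j <;> simp
      have hmat : !![p,q;r,s] * (D.map ⇑(φ h1n)) = !![(0:ZMod 2),1;1,1] * !![p,q;r,s] := by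
        rw [Matrix.eta_fin_two (D.map ⇑(φ h1n))]
        ext i j
        fin_cases i <;> fin_cases j <;>
          simp [Matrix.mul_apply, Fin.sum_univ_two, Matrix.map_apply] <;>
          first
          | linear_combination h.1
          | linear_combination h.2.1
          | linear_combination h.2.2.1
          | linear_combination h.2.2.2
      intro i j
      have e1 : (Pl * D).map ⇑(φ h1n) = !![p,q;r,s] * (D.map ⇑(φ h1n)) := by
        rw [Matrix.map_mul, hPlmap]
      have e2 : (!![(0:R n),1;1,1] * Pl).map ⇑(φ h1n) = !![(0:ZMod 2),1;1,1] * !![p,q;r,s] := by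
        rw [Matrix.map_mul, hPlmap, hTbar]
      exact congrFun (congrFun (e1.trans (hmat.trans e2.symm)) i) j)
    exact ⟨P, !![(0:R n),1;1,1], List.mem_cons_of_mem _ (List.mem_cons_of_mem _ (List.mem_cons_of_mem _ (List.mem_cons_of_mem _ (List.mem_cons_self)))), hP⟩


set_option maxHeartbeats 4000000 in
theorem main' (n : ℕ) (hn : 3 ≤ n) (A : (M2 n)ˣ)
    (hA2 : A ^ 2 = 1) (hA1 : A ≠ 1) :
    ∃ P : (M2 n)ˣ,
      Units.val (P * A * P⁻¹) ∈
        [!![0, 1; 1, 0],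
         !![-1, 0; 0, -1],
         !![1 + ((2^(n-1):ℕ) : R n), 0; 0, 1 + ((2^(n-1):ℕ) : R n)],
         !![-1 + ((2^(n-1):ℕ) : R n), 0; 0, -1 + ((2^(n-1):ℕ) : R n)],
         !![1, 0; ((2^(n-1):ℕ) : R n), 1],
         !![-1, 0; ((2^(n-1):ℕ) : R n), -1],
         !![1 + ((2^(n-1):ℕ) : R n), 0; ((2^(n-1):ℕ) : R n), 1 + ((2^(n-1):ℕ) : R n)],
         !![-1 + ((2^(n-1):ℕ) : R n), 0; ((2^(n-1):ℕ) : R n), -1 + ((2^(n-1):ℕ) : R n)],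
         !![1, 0; 0, 1 + ((2^(n-1):ℕ) : R n)],
         !![-1, 0; 0, -1 + ((2^(n-1):ℕ) : R n)],
         !![1, ((2^(n-1):ℕ) : R n); ((2^(n-1):ℕ) : R n), 1 + ((2^(n-1):ℕ) : R n)],
         !![-1, ((2^(n-1):ℕ) : R n); ((2^(n-1):ℕ) : R n), -1 + ((2^(n-1):ℕ) : R n)],
         !![1, 0; 0, -1],
         !![1 + ((2^(n-1):ℕ) : R n), 0; 0, -1 + ((2^(n-1):ℕ) : R n)],
         !![1, 0; 0, -1 + ((2^(n-1):ℕ) : R n)],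
         !![1 + ((2^(n-1):ℕ) : R n), 0; 0, -1]] := by
  have h1n : 1 ≤ n := by omega
  have h2n : 2 ≤ n := by omega
  have hφ2 : φ h1n 2 = 0 := by rw [map_ofNat]; decide
  have hAA : A.val * A.val = 1 := by
    have h := congrArg Units.val hA2
    rwa [Units.val_pow_eq_pow_val, pow_two, Units.val_one] at h
  have hAne : A.val ≠ 1 := fun h => hA1 (Units.ext h)
  have e00 : A.val 0 0 * A.val 0 0 + A.val 0 1 * A.val 1 0 = 1 := by
    have h : (A.val * A.val) 0 0 = (1 : M2 n) 0 0 := by rw [hAA]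
    rwa [Matrix.mul_apply, Fin.sum_univ_two, Matrix.one_apply_eq] at h
  have e01 : A.val 0 0 * A.val 0 1 + A.val 0 1 * A.val 1 1 = 0 := by
    have h : (A.val * A.val) 0 1 = (1 : M2 n) 0 1 := by rw [hAA]
    rwa [Matrix.mul_apply, Fin.sum_univ_two, Matrix.one_apply_ne (by decide)] at h
  have e10 : A.val 1 0 * A.val 0 0 + A.val 1 1 * A.val 1 0 = 0 := by
    have h : (A.val * A.val) 1 0 = (1 : M2 n) 1 0 := by rw [hAA]
    rwa [Matrix.mul_apply, Fin.sum_univ_two, Matrix.one_apply_ne (by decide)] at h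
  have e11 : A.val 1 0 * A.val 0 1 + A.val 1 1 * A.val 1 1 = 1 := by
    have h : (A.val * A.val) 1 1 = (1 : M2 n) 1 1 := by rw [hAA]
    rwa [Matrix.mul_apply, Fin.sum_univ_two, Matrix.one_apply_eq] at h
  by_cases hc1 : A.val.map ⇑(φ h1n) = 1
  case neg =>
    -- CASE 1 : A is not ≡ 1 mod 2; conjugate to the swap matrix
    obtain ⟨x, y, hdet⟩ := classify_swap (φ h1n (A.val 0 0)) (φ h1n (A.val 0 1))
        (φ h1n (A.val 1 0)) (φ h1n (A.val 1 1))
      ⟨by have := congrArg (φ h1n) e00; rwa [map_add, map_mul, map_mul, map_one] at this,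
       by have := congrArg (φ h1n) e01; rwa [map_add, map_mul, map_mul, map_zero] at this,
       by have := congrArg (φ h1n) e10; rwa [map_add, map_mul, map_mul, map_zero] at this,
       by have := congrArg (φ h1n) e11; rwa [map_add, map_mul, map_mul, map_one] at this⟩
      (by
        rintro ⟨k1, k2, k3, k4⟩
        apply hc1
        ext i j
        rw [Matrix.map_apply]
        by_cases hij : i = j
        · subst hij
          fin_cases i
          · rw [Matrix.one_apply_eq]; exact k1
          · rw [Matrix.one_apply_eq]; exact k4
        · rw [Matrix.one_apply_ne hij]
          fin_cases i <;> fin_cases j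
          · exact absurd rfl hij
          · exact k2
          · exact k3
          · exact absurd rfl hij)
    refine ?_
    set Q : M2 n := !![liftF x, A.val 0 0 * liftF x + A.val 0 1 * liftF y;
        liftF y, A.val 1 0 * liftF x + A.val 1 1 * liftF y] with hQdef
    have hQu : IsUnit Q := by
      apply isUnit_of_det_map h1n
      have hQmap : Q.map ⇑(φ h1n) =
          !![x, φ h1n (A.val 0 0) * x + φ h1n (A.val 0 1) * y;
             y, φ h1n (A.val 1 0) * x + φ h1n (A.val 1 1) * y] := by
        ext i j
        fin_cases i <;> fin_cases j <;>
          simp [hQdef, Matrix.map_apply, map_add, map_mul, φ_liftF h1n]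
      rw [hQmap, Matrix.det_fin_two_of]
      intro h0
      exact one_ne_zero (by linear_combination h0 - hdet)
    have hQeq : A.val * Q = Q * !![(0:R n),1;1,0] := by
      ext i j
      fin_cases i <;> fin_cases j
      · simp [hQdef, Matrix.mul_apply, Fin.sum_univ_two]
      · simp [hQdef, Matrix.mul_apply, Fin.sum_univ_two]
        linear_combination (liftF x) * e00 + (liftF y) * e01
      · simp [hQdef, Matrix.mul_apply, Fin.sum_univ_two]
      · simp [hQdef, Matrix.mul_apply, Fin.sum_univ_two]
        linear_combination (liftF x) * e10 + (liftF y) * e11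
    obtain ⟨P, hP⟩ := conjB A hQu hQeq
    exact ⟨P, by rw [hP]; exact List.mem_cons_self⟩
  case pos =>
    -- CASE 2 : A ≡ 1 mod 2
    have hEnt : ∀ i j, 2 ∣ ((A.val - 1) i j).val := by
      intro i j
      rw [← φ_eq_zero_iff h1n, Matrix.sub_apply, map_sub]
      have h := congrFun (congrFun hc1 i) j
      rw [Matrix.map_apply] at h
      by_cases hij : i = j
      · subst hij
        rw [Matrix.one_apply_eq, map_one]
        rw [Matrix.one_apply_eq] at h
        rw [h]; ring
      · rw [Matrix.one_apply_ne hij, map_zero, sub_zero]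
        rw [Matrix.one_apply_ne hij] at h
        exact h
    set B : M2 n := Matrix.of (fun i j => half ((A.val - 1) i j)) with hBdef
    have hBent : ∀ i j, B i j = half ((A.val - 1) i j) := fun i j => by rw [hBdef]; rfl
    clear_value B
    have hAB : A.val = 1 + (2:R n) • B := by
      ext i j
      rw [Matrix.add_apply, Matrix.smul_apply, smul_eq_mul, hBent, half_spec (hEnt i j),
        Matrix.sub_apply]
      ring
    have hchar2 : ∀ u v : ZMod 2, u + v = 0 → u = v := by decide
    have hB4 : ∀ i j, φ h1n ((B*B + B) i j) = 0 := by
      intro i j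
      rw [φ_eq_zero_iff h1n]
      apply four_torsion_even hn
      have hexp : (4:R n) • (B*B + B) = 0 := by
        have hM : A.val - 1 = (2:R n) • B := by rw [hAB]; abel
        have e2 : (1 + (A.val - 1)) * (1 + (A.val - 1)) = 1 := by
          rw [show (1:M2 n) + (A.val - 1) = A.val by abel]; exact hAA
        have hMM : (A.val - 1) * (A.val - 1) + (2:R n) • (A.val - 1) = 0 := by
          have e3 : ((1:M2 n) + (A.val-1)) * (1 + (A.val-1)) =
              1 + ((A.val-1)*(A.val-1) + (2:R n)•(A.val-1)) := by
            rw [two_smul]; noncomm_ring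
          rw [e3] at e2
          have h0 : (1:M2 n) + ((A.val-1)*(A.val-1) + (2:R n)•(A.val-1)) = 1 + 0 := by
            rw [add_zero]; exact e2
          exact add_left_cancel h0
        rw [hM, smul_mul_assoc, mul_smul_comm, smul_smul, smul_smul,
          show ((2:R n)*2) = 4 by norm_num] at hMM
        rw [smul_add]
        exact hMM
      have h5 : ((4:R n) • (B*B + B)) i j = 0 := by rw [hexp]; simp
      rwa [Matrix.smul_apply, smul_eq_mul] at h5
    have q00 : φ h1n (B 0 0) * φ h1n (B 0 0) + φ h1n (B 0 1) * φ h1n (B 1 0) = φ h1n (B 0 0) := by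
      have h := hB4 0 0
      rw [Matrix.add_apply, map_add, Matrix.mul_apply, Fin.sum_univ_two, map_add, map_mul,
        map_mul] at h
      exact hchar2 _ _ h
    have q01 : φ h1n (B 0 0) * φ h1n (B 0 1) + φ h1n (B 0 1) * φ h1n (B 1 1) = φ h1n (B 0 1) := by
      have h := hB4 0 1
      rw [Matrix.add_apply, map_add, Matrix.mul_apply, Fin.sum_univ_two, map_add, map_mul,
        map_mul] at h
      exact hchar2 _ _ h
    have q10 : φ h1n (B 1 0) * φ h1n (B 0 0) + φ h1n (B 1 1) * φ h1n (B 1 0) = φ h1n (B 1 0) := by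
      have h := hB4 1 0
      rw [Matrix.add_apply, map_add, Matrix.mul_apply, Fin.sum_univ_two, map_add, map_mul,
        map_mul] at h
      exact hchar2 _ _ h
    have q11 : φ h1n (B 1 0) * φ h1n (B 0 1) + φ h1n (B 1 1) * φ h1n (B 1 1) = φ h1n (B 1 1) := by
      have h := hB4 1 1
      rw [Matrix.add_apply, map_add, Matrix.mul_apply, Fin.sum_univ_two, map_add, map_mul,
        map_mul] at h
      exact hchar2 _ _ h
    rcases classify_idem (φ h1n (B 0 0)) (φ h1n (B 0 1)) (φ h1n (B 1 0)) (φ h1n (B 1 1))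
      ⟨q00, q01, q10, q11⟩ with hz | ho | ⟨p, q, r, s, hdet, hPB⟩
    · -- B ≡ 0 mod 2 : A ≡ 1 mod 4
      have h4A : ∀ i j, ψ h2n ((A.val - 1) i j) = 0 := by
        intro i j
        rw [ψ_eq_zero_iff h2n]
        have he : 2 ∣ (half ((A.val - 1) i j)).val := by
          rw [← φ_eq_zero_iff h1n, ← hBent i j]
          fin_cases i <;> fin_cases j
          · exact hz.1
          · exact hz.2.1
          · exact hz.2.2.1
          · exact hz.2.2.2
        rw [half_val] at he
        have h2d := hEnt i j
        omega
      obtain ⟨P, T, hT, hPT⟩ := core hn A h4A hAA hAne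
      refine ⟨P, ?_⟩
      rw [hPT]
      simp only [List.mem_cons, List.not_mem_nil, or_false] at hT
      rcases hT with rfl|rfl|rfl|rfl|rfl
      · rw [show (1:M2 n) + ((2^(n-1):ℕ) : R n) • !![(1:R n),0;0,1] = !![1 + ((2^(n-1):ℕ) : R n), 0; 0, 1 + ((2^(n-1):ℕ) : R n)] by
          ext i j; fin_cases i <;> fin_cases j <;>
            simp [Matrix.add_apply, Matrix.smul_apply, Matrix.one_apply]]
        exact List.mem_cons_of_mem _ (List.mem_cons_of_mem _ (List.mem_cons_self))
      · rw [show (1:M2 n) + ((2^(n-1):ℕ) : R n) • !![(0:R n),0;1,0] = !![1, 0; ((2^(n-1):ℕ) : R n), 1] by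
          ext i j; fin_cases i <;> fin_cases j <;>
            simp [Matrix.add_apply, Matrix.smul_apply, Matrix.one_apply]]
        exact List.mem_cons_of_mem _ (List.mem_cons_of_mem _ (List.mem_cons_of_mem _ (List.mem_cons_of_mem _ (List.mem_cons_self))))
      · rw [show (1:M2 n) + ((2^(n-1):ℕ) : R n) • !![(1:R n),0;1,1] = !![1 + ((2^(n-1):ℕ) : R n), 0; ((2^(n-1):ℕ) : R n), 1 + ((2^(n-1):ℕ) : R n)] by
          ext i j; fin_cases i <;> fin_cases j <;>
            simp [Matrix.add_apply, Matrix.smul_apply, Matrix.one_apply]]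
        exact List.mem_cons_of_mem _ (List.mem_cons_of_mem _ (List.mem_cons_of_mem _ (List.mem_cons_of_mem _ (List.mem_cons_of_mem _ (List.mem_cons_of_mem _ (List.mem_cons_self))))))
      · rw [show (1:M2 n) + ((2^(n-1):ℕ) : R n) • !![(0:R n),0;0,1] = !![1, 0; 0, 1 + ((2^(n-1):ℕ) : R n)] by
          ext i j; fin_cases i <;> fin_cases j <;>
            simp [Matrix.add_apply, Matrix.smul_apply, Matrix.one_apply]]
        exact List.mem_cons_of_mem _ (List.mem_cons_of_mem _ (List.mem_cons_of_mem _ (List.mem_cons_of_mem _ (List.mem_cons_of_mem _ (List.mem_cons_of_mem _ (List.mem_cons_of_mem _ (List.mem_cons_of_mem _ (List.mem_cons_self))))))))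
      · rw [show (1:M2 n) + ((2^(n-1):ℕ) : R n) • !![(0:R n),1;1,1] = !![1, ((2^(n-1):ℕ) : R n); ((2^(n-1):ℕ) : R n), 1 + ((2^(n-1):ℕ) : R n)] by
          ext i j; fin_cases i <;> fin_cases j <;>
            simp [Matrix.add_apply, Matrix.smul_apply, Matrix.one_apply]]
        exact List.mem_cons_of_mem _ (List.mem_cons_of_mem _ (List.mem_cons_of_mem _ (List.mem_cons_of_mem _ (List.mem_cons_of_mem _ (List.mem_cons_of_mem _ (List.mem_cons_of_mem _ (List.mem_cons_of_mem _ (List.mem_cons_of_mem _ (List.mem_cons_of_mem _ (List.mem_cons_self))))))))))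
    · -- B ≡ 1 mod 2 : A ≡ -1 mod 4
      by_cases hAm1 : A.val = -1
      · refine ⟨1, ?_⟩
        have h1 : Units.val ((1:(M2 n)ˣ) * A * 1⁻¹) = A.val := by
          rw [inv_one, mul_one, one_mul]
        rw [h1, hAm1, show (-1 : M2 n) = !![(-1:R n),0;0,-1] by
          ext i j; fin_cases i <;> fin_cases j <;> simp [Matrix.neg_apply, Matrix.one_apply]]
        exact List.mem_cons_of_mem _ (List.mem_cons_self)
      · have h4N : ∀ i j, ψ h2n (((-A).val - 1) i j) = 0 := by
          intro i j
          have hneg : ((-A).val - 1) i j = -(A.val i j + (1:M2 n) i j) := by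
            rw [Units.val_neg, Matrix.sub_apply, Matrix.neg_apply]
            ring
          rw [hneg, map_neg, neg_eq_zero]
          have hAij : A.val i j = (1:M2 n) i j + 2 * B i j := by
            have h := congrFun (congrFun hAB i) j
            rwa [Matrix.add_apply, Matrix.smul_apply, smul_eq_mul] at h
          rw [hAij]
          by_cases hij : i = j
          · subst hij
            rw [Matrix.one_apply_eq, show (1:R n) + 2*B i i + 1 = 2*(1 + B i i) by ring]
            apply ψ_double_even h2n
            rw [← φ_eq_zero_iff h1n, map_add, map_one]
            have hbii : φ h1n (B i i) = 1 := by
              fin_cases i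
              · exact ho.1
              · exact ho.2.2.2
            rw [hbii]; decide
          · rw [Matrix.one_apply_ne hij, show (0:R n) + 2*B i j + 0 = 2*(B i j) by ring]
            apply ψ_double_even h2n
            rw [← φ_eq_zero_iff h1n]
            fin_cases i <;> fin_cases j
            · exact absurd rfl hij
            · exact ho.2.1
            · exact ho.2.2.1
            · exact absurd rfl hij
        have hNAA : (-A).val * (-A).val = 1 := by rw [Units.val_neg, neg_mul_neg]; exact hAA
        have hNAne : (-A).val ≠ 1 := by
          rw [Units.val_neg]
          intro h
          exact hAm1 (neg_eq_iff_eq_neg.1 h)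
        obtain ⟨P, T, hT, hPT⟩ := core hn (-A) h4N hNAA hNAne
        have hval : Units.val (P * (-A) * P⁻¹) = -(Units.val (P * A * P⁻¹)) := by
          rw [Units.val_mul, Units.val_mul, Units.val_mul, Units.val_mul, Units.val_neg,
            mul_neg, neg_mul]
        have hfin : Units.val (P * A * P⁻¹) = -(1 + ((2^(n-1):ℕ) : R n) • T) := by
          exact neg_eq_iff_eq_neg.1 (hval.symm.trans hPT)
        refine ⟨P, ?_⟩
        rw [hfin]
        have hcc2 : ((2:R n))^(n-1) + ((2:R n))^(n-1) = 0 := by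
          have h := c_add_c (n := n) h1n; push_cast at h; exact h
        simp only [List.mem_cons, List.not_mem_nil, or_false] at hT
        rcases hT with rfl|rfl|rfl|rfl|rfl
        · rw [show -((1:M2 n) + ((2^(n-1):ℕ) : R n) • !![(1:R n),0;0,1]) = !![-1 + ((2^(n-1):ℕ) : R n), 0; 0, -1 + ((2^(n-1):ℕ) : R n)] by
            ext i j; fin_cases i <;> fin_cases j <;>
              simp [Matrix.add_apply, Matrix.neg_apply, Matrix.smul_apply, Matrix.one_apply] <;>
              (push_cast; first
               | ring1
               | linear_combination -hcc2
               | linear_combination hcc2)]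
          exact List.mem_cons_of_mem _ (List.mem_cons_of_mem _ (List.mem_cons_of_mem _ (List.mem_cons_self)))
        · rw [show -((1:M2 n) + ((2^(n-1):ℕ) : R n) • !![(0:R n),0;1,0]) = !![-1, 0; ((2^(n-1):ℕ) : R n), -1] by
            ext i j; fin_cases i <;> fin_cases j <;>
              simp [Matrix.add_apply, Matrix.neg_apply, Matrix.smul_apply, Matrix.one_apply] <;>
              (push_cast; first
               | ring1
               | linear_combination -hcc2
               | linear_combination hcc2)]
          exact List.mem_cons_of_mem _ (List.mem_cons_of_mem _ (List.mem_cons_of_mem _ (List.mem_cons_of_mem _ (List.mem_cons_of_mem _ (List.mem_cons_self)))))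
        · rw [show -((1:M2 n) + ((2^(n-1):ℕ) : R n) • !![(1:R n),0;1,1]) = !![-1 + ((2^(n-1):ℕ) : R n), 0; ((2^(n-1):ℕ) : R n), -1 + ((2^(n-1):ℕ) : R n)] by
            ext i j; fin_cases i <;> fin_cases j <;>
              simp [Matrix.add_apply, Matrix.neg_apply, Matrix.smul_apply, Matrix.one_apply] <;>
              (push_cast; first
               | ring1
               | linear_combination -hcc2
               | linear_combination hcc2)]
          exact List.mem_cons_of_mem _ (List.mem_cons_of_mem _ (List.mem_cons_of_mem _ (List.mem_cons_of_mem _ (List.mem_cons_of_mem _ (List.mem_cons_of_mem _ (List.mem_cons_of_mem _ (List.mem_cons_self)))))))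
        · rw [show -((1:M2 n) + ((2^(n-1):ℕ) : R n) • !![(0:R n),0;0,1]) = !![-1, 0; 0, -1 + ((2^(n-1):ℕ) : R n)] by
            ext i j; fin_cases i <;> fin_cases j <;>
              simp [Matrix.add_apply, Matrix.neg_apply, Matrix.smul_apply, Matrix.one_apply] <;>
              (push_cast; first
               | ring1
               | linear_combination -hcc2
               | linear_combination hcc2)]
          exact List.mem_cons_of_mem _ (List.mem_cons_of_mem _ (List.mem_cons_of_mem _ (List.mem_cons_of_mem _ (List.mem_cons_of_mem _ (List.mem_cons_of_mem _ (List.mem_cons_of_mem _ (List.mem_cons_of_mem _ (List.mem_cons_of_mem _ (List.mem_cons_self)))))))))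
        · rw [show -((1:M2 n) + ((2^(n-1):ℕ) : R n) • !![(0:R n),1;1,1]) = !![-1, ((2^(n-1):ℕ) : R n); ((2^(n-1):ℕ) : R n), -1 + ((2^(n-1):ℕ) : R n)] by
            ext i j; fin_cases i <;> fin_cases j <;>
              simp [Matrix.add_apply, Matrix.neg_apply, Matrix.smul_apply, Matrix.one_apply] <;>
              (push_cast; first
               | ring1
               | linear_combination -hcc2
               | linear_combination hcc2)]
          exact List.mem_cons_of_mem _ (List.mem_cons_of_mem _ (List.mem_cons_of_mem _ (List.mem_cons_of_mem _ (List.mem_cons_of_mem _ (List.mem_cons_of_mem _ (List.mem_cons_of_mem _ (List.mem_cons_of_mem _ (List.mem_cons_of_mem _ (List.mem_cons_of_mem _ (List.mem_cons_of_mem _ (List.mem_cons_self)))))))))))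
    · -- rank one case
      set Pl : M2 n := !![liftF p, liftF q; liftF r, liftF s] with hPldef
      have hPlmap : Pl.map ⇑(φ h1n) = !![p, q; r, s] := by
        ext i j; fin_cases i <;> fin_cases j <;> simp [hPldef, Matrix.map_apply, φ_liftF h1n]
      have hPlu : IsUnit Pl := by
        apply isUnit_of_det_map h1n
        rw [hPlmap, Matrix.det_fin_two_of]
        intro h0; rw [hdet] at h0; exact one_ne_zero h0
      set uP := hPlu.unit with huPdef
      have huPval : uP.val = Pl := hPlu.unit_spec
      set A2 : (M2 n)ˣ := uP * A * uP⁻¹ with hA2def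
      have hPinv1 : Pl * (uP⁻¹).val = 1 := by
        have h0 := uP.mul_inv; rwa [huPval] at h0
      have hA2val : A2.val = Pl * A.val * (uP⁻¹).val := by
        rw [hA2def, Units.val_mul, Units.val_mul, huPval]
      set B' : M2 n := Pl * B * (uP⁻¹).val with hB'def
      have hA'B : A2.val = 1 + (2:R n) • B' := by
        rw [hA2val, hAB, hB'def, mul_add, mul_one, mul_smul_comm, add_mul, smul_mul_assoc, hPinv1]
      have hB'map : B'.map ⇑(φ h1n) = !![(0:ZMod 2),0;0,1] := by
        have hBbar : !![p,q;r,s] * (B.map ⇑(φ h1n)) = !![(0:ZMod 2),0;0,1] * !![p,q;r,s] := by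
          rw [Matrix.eta_fin_two (B.map ⇑(φ h1n))]
          ext i j
          fin_cases i <;> fin_cases j <;>
            simp [Matrix.mul_apply, Fin.sum_univ_two, Matrix.map_apply] <;>
            first
            | linear_combination hPB.1
            | linear_combination hPB.2.1
            | linear_combination hPB.2.2.1
            | linear_combination hPB.2.2.2
        have hPinvmap : !![p,q;r,s] * ((uP⁻¹).val.map ⇑(φ h1n)) = 1 := by
          rw [← hPlmap, ← Matrix.map_mul, hPinv1, Matrix.map_one _ (map_zero _) (map_one _)]
        calc B'.map ⇑(φ h1n)
            = (Pl.map ⇑(φ h1n) * B.map ⇑(φ h1n)) * ((uP⁻¹).val.map ⇑(φ h1n)) := by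
              rw [hB'def, Matrix.map_mul, Matrix.map_mul]
          _ = (!![(0:ZMod 2),0;0,1] * !![p,q;r,s]) * ((uP⁻¹).val.map ⇑(φ h1n)) := by
              rw [hPlmap, hBbar]
          _ = !![(0:ZMod 2),0;0,1] * (!![p,q;r,s] * ((uP⁻¹).val.map ⇑(φ h1n))) := by
              rw [mul_assoc]
          _ = !![(0:ZMod 2),0;0,1] := by rw [hPinvmap, mul_one]
      clear_value B'
      have hb00 : φ h1n (B' 0 0) = 0 := by
        have h := congrFun (congrFun hB'map 0) 0; simpa [Matrix.map_apply] using h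
      have hb01 : φ h1n (B' 0 1) = 0 := by
        have h := congrFun (congrFun hB'map 0) 1; simpa [Matrix.map_apply] using h
      have hb10 : φ h1n (B' 1 0) = 0 := by
        have h := congrFun (congrFun hB'map 1) 0; simpa [Matrix.map_apply] using h
      have hb11 : φ h1n (B' 1 1) = 1 := by
        have h := congrFun (congrFun hB'map 1) 1; simpa [Matrix.map_apply] using h
      have hA00 : A2.val 0 0 = 1 + 2 * B' 0 0 := by
        have h := congrFun (congrFun hA'B 0) 0
        rwa [Matrix.add_apply, Matrix.smul_apply, smul_eq_mul, Matrix.one_apply_eq] at h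
      have hA01 : A2.val 0 1 = 2 * B' 0 1 := by
        have h := congrFun (congrFun hA'B 0) 1
        rwa [Matrix.add_apply, Matrix.smul_apply, smul_eq_mul,
          Matrix.one_apply_ne (by decide), zero_add] at h
      have hA10 : A2.val 1 0 = 2 * B' 1 0 := by
        have h := congrFun (congrFun hA'B 1) 0
        rwa [Matrix.add_apply, Matrix.smul_apply, smul_eq_mul,
          Matrix.one_apply_ne (by decide), zero_add] at h
      have hA11 : A2.val 1 1 = 1 + 2 * B' 1 1 := by
        have h := congrFun (congrFun hA'B 1) 1
        rwa [Matrix.add_apply, Matrix.smul_apply, smul_eq_mul, Matrix.one_apply_eq] at h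
      set u : R n := B' 0 0 - B' 1 1 with hudef
      have hu : IsUnit u := by
        apply isUnit_of_odd h1n
        rw [hudef, map_sub, hb00, hb11]
        decide
      have hb0 : 2 * half (B' 0 1) = B' 0 1 := half_spec ((φ_eq_zero_iff h1n _).1 hb01)
      have hc0 : 2 * half (B' 1 0) = B' 1 0 := half_spec ((φ_eq_zero_iff h1n _).1 hb10)
      obtain ⟨z, hz⟩ := solve_quad h1n hu (half (B' 0 1)) (half (B' 1 0))
      obtain ⟨w, hw⟩ := solve_quad h1n hu.neg (half (B' 1 0)) (half (B' 0 1))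
      set μ : R n := A2.val 0 0 + A2.val 0 1 * (2*z) with hμdef
      set ν : R n := A2.val 1 1 + A2.val 1 0 * (2*w) with hνdef
      set Q : M2 n := !![1, 2*w; 2*z, 1] with hQdef
      have hQu : IsUnit Q := by
        apply isUnit_of_det_map h1n
        have hQmap : Q.map ⇑(φ h1n) = !![(1:ZMod 2), 0; 0, 1] := by
          ext i j; fin_cases i <;> fin_cases j <;>
            simp [hQdef, Matrix.map_apply, map_mul, hφ2]
        rw [hQmap, Matrix.det_fin_two_of]
        decide
      have hQeq : A2.val * Q = Q * !![μ, 0; 0, ν] := by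
        ext i j
        fin_cases i <;> fin_cases j
        · simp [hQdef, Matrix.mul_apply, Fin.sum_univ_two] <;>
            linear_combination hμdef
        · simp [hQdef, Matrix.mul_apply, Fin.sum_univ_two]
          rw [hνdef, hA00, hA01, hA10, hA11, ← hb0, ← hc0]
          first
          | linear_combination (4:R n)*hw + (4*w)*hudef
          | linear_combination (4:R n)*hw - (4*w)*hudef
          | linear_combination (-4:R n)*hw + (4*w)*hudef
          | linear_combination (-4:R n)*hw - (4*w)*hudef
        · simp [hQdef, Matrix.mul_apply, Fin.sum_univ_two]
          rw [hμdef, hA00, hA01, hA10, hA11, ← hb0, ← hc0]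
          first
          | linear_combination (4:R n)*hz + (4*z)*hudef
          | linear_combination (4:R n)*hz - (4*z)*hudef
          | linear_combination (-4:R n)*hz + (4*z)*hudef
          | linear_combination (-4:R n)*hz - (4*z)*hudef
        · simp [hQdef, Matrix.mul_apply, Fin.sum_univ_two] <;>
            linear_combination hνdef
      have hA2sq : A2.val * A2.val = 1 := by
        have hAu : A * A = 1 := Units.ext (by rw [Units.val_mul, hAA, Units.val_one])
        have hsq : A2 * A2 = 1 := by
          rw [hA2def]
          have hgr : uP * A * uP⁻¹ * (uP * A * uP⁻¹) = uP * (A * A) * uP⁻¹ := by group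
          rw [hgr, hAu, mul_one, mul_inv_cancel]
        rw [← Units.val_mul, hsq, Units.val_one]
      have hDD : !![μ,0;0,ν] * !![μ,0;0,ν] = 1 := by
        have hQD : Q * (!![μ,0;0,ν] * !![μ,0;0,ν]) = Q * 1 := by
          rw [mul_one]
          calc Q * (!![μ,0;0,ν] * !![μ,0;0,ν]) = (Q * !![μ,0;0,ν]) * !![μ,0;0,ν] := by
                rw [mul_assoc]
            _ = (A2.val * Q) * !![μ,0;0,ν] := by rw [hQeq]
            _ = A2.val * (Q * !![μ,0;0,ν]) := by rw [mul_assoc]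
            _ = A2.val * (A2.val * Q) := by rw [hQeq]
            _ = (A2.val * A2.val) * Q := by rw [mul_assoc]
            _ = Q := by rw [hA2sq, one_mul]
        exact hQu.mul_left_cancel hQD
      have hμ2 : μ^2 = 1 := by
        have h := congrFun (congrFun hDD 0) 0
        rw [Matrix.mul_apply, Fin.sum_univ_two] at h
        simp at h
        rw [pow_two]
        linear_combination h
      have hν2 : ν^2 = 1 := by
        have h := congrFun (congrFun hDD 1) 1
        rw [Matrix.mul_apply, Fin.sum_univ_two] at h
        simp at h
        rw [pow_two]
        linear_combination h
      have hψc' : ψ h2n ((2^(n-1):ℕ) : R n) = 0 := ψ_c hn h2n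
      have hψμ : ψ h2n μ = 1 := by
        have hform : μ = 1 + 2*(B' 0 0 + B' 0 1 * (2*z)) := by
          rw [hμdef, hA00, hA01]; ring
        have hev : 2 ∣ (B' 0 0 + B' 0 1 * (2*z)).val := by
          rw [← φ_eq_zero_iff h1n, map_add, map_mul, hb00, hb01]
          simp
        rw [hform, map_add, map_one, ψ_double_even h2n _ hev, add_zero]
      have hψν : ψ h2n ν = 3 := by
        have hform : ν = 1 + 2*(B' 1 1 + B' 1 0 * (2*w)) := by
          rw [hνdef, hA11, hA10]; ring
        have hoddv : ¬ 2 ∣ (B' 1 1 + B' 1 0 * (2*w)).val := by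
          intro hdvd
          have h0 := (φ_eq_zero_iff h1n _).2 hdvd
          rw [map_add, map_mul, hb11, hb10] at h0
          simp at h0
        rw [hform, map_add, map_one, ψ_double_odd h2n _ hoddv]
        decide
      have hψm1 : ψ h2n (-1 : R n) = 3 := by rw [map_neg, map_one]; decide
      have hψ1c : ψ h2n (1 + ((2^(n-1):ℕ) : R n)) = 1 := by rw [map_add, map_one, hψc']; decide
      have hψmc : ψ h2n (-1 + ((2^(n-1):ℕ) : R n)) = 3 := by rw [map_add, map_neg, map_one, hψc']; decide
      obtain ⟨P2, hP2⟩ := conjB A2 hQu hQeq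
      refine ⟨P2 * uP, ?_⟩
      have hre : P2 * uP * A * (P2 * uP)⁻¹ = P2 * A2 * P2⁻¹ := by
        rw [hA2def]; group
      rw [hre, hP2]
      rcases sqrt_one hn μ hμ2 with hμ1|hμ1|hμ1|hμ1
      · rcases sqrt_one hn ν hν2 with hν1|hν1|hν1|hν1
        · rw [hν1, map_one] at hψν; exact absurd hψν (by decide)
        · rw [hμ1, hν1]
          exact List.mem_cons_of_mem _ (List.mem_cons_of_mem _ (List.mem_cons_of_mem _ (List.mem_cons_of_mem _ (List.mem_cons_of_mem _ (List.mem_cons_of_mem _ (List.mem_cons_of_mem _ (List.mem_cons_of_mem _ (List.mem_cons_of_mem _ (List.mem_cons_of_mem _ (List.mem_cons_of_mem _ (List.mem_cons_of_mem _ (List.mem_cons_self))))))))))))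
        · rw [hν1, hψ1c] at hψν; exact absurd hψν (by decide)
        · rw [hμ1, hν1]
          exact List.mem_cons_of_mem _ (List.mem_cons_of_mem _ (List.mem_cons_of_mem _ (List.mem_cons_of_mem _ (List.mem_cons_of_mem _ (List.mem_cons_of_mem _ (List.mem_cons_of_mem _ (List.mem_cons_of_mem _ (List.mem_cons_of_mem _ (List.mem_cons_of_mem _ (List.mem_cons_of_mem _ (List.mem_cons_of_mem _ (List.mem_cons_of_mem _ (List.mem_cons_of_mem _ (List.mem_cons_self))))))))))))))
      · rw [hμ1, hψm1] at hψμ; exact absurd hψμ (by decide)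
      · rcases sqrt_one hn ν hν2 with hν1|hν1|hν1|hν1
        · rw [hν1, map_one] at hψν; exact absurd hψν (by decide)
        · rw [hμ1, hν1]
          exact List.mem_cons_of_mem _ (List.mem_cons_of_mem _ (List.mem_cons_of_mem _ (List.mem_cons_of_mem _ (List.mem_cons_of_mem _ (List.mem_cons_of_mem _ (List.mem_cons_of_mem _ (List.mem_cons_of_mem _ (List.mem_cons_of_mem _ (List.mem_cons_of_mem _ (List.mem_cons_of_mem _ (List.mem_cons_of_mem _ (List.mem_cons_of_mem _ (List.mem_cons_of_mem _ (List.mem_cons_of_mem _ (List.mem_cons_self)))))))))))))))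
        · rw [hν1, hψ1c] at hψν; exact absurd hψν (by decide)
        · rw [hμ1, hν1]
          exact List.mem_cons_of_mem _ (List.mem_cons_of_mem _ (List.mem_cons_of_mem _ (List.mem_cons_of_mem _ (List.mem_cons_of_mem _ (List.mem_cons_of_mem _ (List.mem_cons_of_mem _ (List.mem_cons_of_mem _ (List.mem_cons_of_mem _ (List.mem_cons_of_mem _ (List.mem_cons_of_mem _ (List.mem_cons_of_mem _ (List.mem_cons_of_mem _ (List.mem_cons_self)))))))))))))
      · rw [hμ1, hψmc] at hψμ; exact absurd hψμ (by decide)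

end Inv16


/-- For `n ≥ 3`, every non-identity involution in `GL₂(ℤ/2ⁿ)` is conjugate to one of the
listed `16` matrices (where `c = 2^{n-1}`). -/
theorem involution_conjugate_to_one_of_sixteen
    (n : ℕ) (hn : 3 ≤ n) (A : GL (Fin 2) (ZMod (2 ^ n)))
    (hA2 : A ^ 2 = 1) (hA1 : A ≠ 1) :
    letI c : ZMod (2 ^ n) := (2 ^ (n - 1) : ℕ)
    ∃ P : GL (Fin 2) (ZMod (2 ^ n)),
      ((P * A * P⁻¹ : GL (Fin 2) (ZMod (2 ^ n))) : Matrix (Fin 2) (Fin 2) (ZMod (2 ^ n))) ∈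
        [!![0, 1; 1, 0],
         !![-1, 0; 0, -1], !![1 + c, 0; 0, 1 + c], !![-1 + c, 0; 0, -1 + c],
         !![1, 0; c, 1], !![-1, 0; c, -1], !![1 + c, 0; c, 1 + c], !![-1 + c, 0; c, -1 + c],
         !![1, 0; 0, 1 + c], !![-1, 0; 0, -1 + c], !![1, c; c, 1 + c], !![-1, c; c, -1 + c],
         !![1, 0; 0, -1], !![1 + c, 0; 0, -1 + c], !![1, 0; 0, -1 + c], !![1 + c, 0; 0, -1]] :=
  Inv16.main' n hn A hA2 hA1
end

section
/- Let n ≥ 3 and let A = [[a,c],[b,-a]] ∈ GL₂(Z/2^n) with A² = I, b and c even, and a ≡ 1 (mod 4). Then A is conjugate in GL₂(Z/2^n) to [[1,0],[0,-1]] if (a² + bc − 1)/2 = 0 in Z/2^n, and to [[1+2^{n-1},0],[0,-1+2^{n-1}]] if (a² + bc − 1)/2 = 2^{n-1} in Z/2^n. -/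
open Matrix

lemma conj_aux {R : Type*} [CommRing R] (A : GL (Fin 2) R) (Pm D : Matrix (Fin 2) (Fin 2) R)
    (hdet : IsUnit Pm.det) (hcomm : Pm * (A : Matrix (Fin 2) (Fin 2) R) = D * Pm) :
    ∃ P : GL (Fin 2) R, ((P * A * P⁻¹ : GL (Fin 2) R) : Matrix (Fin 2) (Fin 2) R) = D := by
  refine ⟨Matrix.nonsingInvUnit Pm hdet, ?_⟩
  have hcoe : ((Matrix.nonsingInvUnit Pm hdet * A * (Matrix.nonsingInvUnit Pm hdet)⁻¹ :
      GL (Fin 2) R) : Matrix (Fin 2) (Fin 2) R)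
      = Pm * (A : Matrix (Fin 2) (Fin 2) R) * Pm⁻¹ := by
    simp only [Matrix.GeneralLinearGroup.coe_mul, Matrix.coe_units_inv]
    rfl
  rw [hcoe, hcomm, Matrix.mul_nonsing_inv_cancel_right _ _ hdet]

lemma odd_unit {n : ℕ} (m : ℕ) (hm : Odd m) : IsUnit ((m : ℕ) : ZMod (2^n)) := by
  haveI : NeZero (2^n) := ⟨by positivity⟩
  exact (ZMod.isUnit_iff_coprime m (2^n)).mpr (hm.coprime_two_right.pow_right n)

lemma pow_pred {M : Type*} [Monoid M] (x : M) (m : ℕ) (h : 1 ≤ m) :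
    x ^ m = x * x ^ (m - 1) := by
  rw [← pow_succ']; congr 1; omega

/-- Let `n ≥ 3` and `A = [[a,c],[b,-a]] ∈ GL₂(ℤ/2ⁿ)` with `A² = I`, `b, c` even and
`a ≡ 1 (mod 4)`. Then `A` is conjugate to `diag(1,-1)` when `(a² + bc − 1)/2 = 0` (computed
with integer representatives), and to `diag(1+2^{n-1}, -1+2^{n-1})` when
`(a² + bc − 1)/2 = 2^{n-1}`. -/
theorem involution_trace_zero_conjugation
    (n : ℕ) (hn : 3 ≤ n) (A : GL (Fin 2) (ZMod (2 ^ n)))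
    (a b c : ZMod (2 ^ n))
    (hm : (A : Matrix (Fin 2) (Fin 2) (ZMod (2 ^ n))) = !![a, c; b, -a])
    (hA2 : A ^ 2 = 1)
    (hb : Even b) (hc : Even c)
    (ha : ∃ u : ZMod (2 ^ n), a = 1 + 4 * u) :
    letI e : ZMod (2 ^ n) := (((a.val ^ 2 + b.val * c.val - 1) / 2 : ℕ) : ZMod (2 ^ n))
    (e = 0 →
      ∃ P : GL (Fin 2) (ZMod (2 ^ n)),
        ((P * A * P⁻¹ : GL (Fin 2) (ZMod (2 ^ n))) : Matrix (Fin 2) (Fin 2) (ZMod (2 ^ n))) =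
          !![1, 0; 0, -1]) ∧
    (e = ((2 ^ (n - 1) : ℕ) : ZMod (2 ^ n)) →
      ∃ P : GL (Fin 2) (ZMod (2 ^ n)),
        ((P * A * P⁻¹ : GL (Fin 2) (ZMod (2 ^ n))) : Matrix (Fin 2) (Fin 2) (ZMod (2 ^ n))) =
          !![1 + ((2 ^ (n - 1) : ℕ) : ZMod (2 ^ n)), 0;
             0, -1 + ((2 ^ (n - 1) : ℕ) : ZMod (2 ^ n))]) := by
  haveI : NeZero (2^n) := ⟨by positivity⟩
  haveI : Fact (1 < 4) := ⟨by norm_num⟩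
  -- basic casts
  have hav : ((a.val : ℕ) : ZMod (2^n)) = a := by simp [ZMod.natCast_val, ZMod.cast_id]
  have hbv : ((b.val : ℕ) : ZMod (2^n)) = b := by simp [ZMod.natCast_val, ZMod.cast_id]
  have hcv : ((c.val : ℕ) : ZMod (2^n)) = c := by simp [ZMod.natCast_val, ZMod.cast_id]
  -- from A^2 = 1
  have h1 : a^2 + b*c = 1 := by
    have h := congrArg (Units.val) hA2
    rw [Units.val_pow_eq_pow_val, Units.val_one] at h
    rw [hm] at h
    have h00 := congrFun (congrFun h 0) 0
    simp [pow_two, Matrix.mul_apply, Fin.sum_univ_two] at h00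
    linear_combination h00
  -- a.val % 4 = 1
  have hα4 : a.val % 4 = 1 := by
    obtain ⟨u, hu⟩ := ha
    have h4dvd : (4:ℕ) ∣ 2^n := by
      have : (2:ℕ)^2 ∣ 2^n := pow_dvd_pow 2 (by omega)
      simpa using this
    have hcast4 : ((a.val : ℕ) : ZMod 4) = 1 := by
      have hx : ((a.val:ℕ) : ZMod 4) = ZMod.castHom h4dvd (ZMod 4) a := by
        rw [ZMod.castHom_apply, ZMod.natCast_val]
      rw [hx, hu, map_add, _root_.map_one, _root_.map_mul, map_ofNat]
      rw [show (4:ZMod 4) = 0 by decide]; ring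
    have := congrArg ZMod.val hcast4
    rwa [ZMod.val_natCast, ZMod.val_one] at this
  -- evenness of b.val, c.val
  have h2dvd : (2:ℕ) ∣ 2^n := dvd_pow_self 2 (by omega)
  have hbe : b.val % 2 = 0 := by
    obtain ⟨t, ht⟩ := hb
    have h : b.val = (t.val + t.val) % 2^n := by rw [ht, ZMod.val_add]
    rw [h, Nat.mod_mod_of_dvd _ h2dvd]; omega
  have hce : c.val % 2 = 0 := by
    obtain ⟨t, ht⟩ := hc
    have h : c.val = (t.val + t.val) % 2^n := by rw [ht, ZMod.val_add]
    rw [h, Nat.mod_mod_of_dvd _ h2dvd]; omega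
  -- a.val^2 + b.val*c.val = 2^n * k + 1
  have hXcast : ((a.val^2 + b.val*c.val : ℕ) : ZMod (2^n)) = ((1:ℕ) : ZMod (2^n)) := by
    push_cast
    rw [hav, hbv, hcv]
    linear_combination h1
  have hmod := (ZMod.natCast_eq_natCast_iff _ _ _).mp hXcast
  have hX1 : 1 ≤ a.val^2 + b.val*c.val :=
    le_trans (Nat.one_le_pow _ _ (by omega)) (Nat.le_add_right _ _)
  obtain ⟨k, hk⟩ := (Nat.modEq_iff_dvd' hX1).mp hmod.symm
  have hk2 : a.val^2 + b.val*c.val = 2^n * k + 1 := by omega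
  -- named halves
  set p0 := (a.val + 1)/2 with hp0def
  set β2 := b.val/2 with hβ2def
  set γ2 := c.val/2 with hγ2def
  have hp0n : a.val + 1 = 2*p0 := by omega
  have hb2n : b.val = 2*β2 := by omega
  have hc2n : c.val = 2*γ2 := by omega
  -- integer identities
  have zsum : ((a.val:ℤ))^2 + (b.val:ℤ)*(c.val:ℤ) = 2^n*(k:ℤ) + 1 := by exact_mod_cast hk2
  have zp : (a.val:ℤ) + 1 = 2*(p0:ℤ) := by exact_mod_cast hp0n
  have zb : (b.val:ℤ) = 2*(β2:ℤ) := by exact_mod_cast hb2n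
  have zc : (c.val:ℤ) = 2*(γ2:ℤ) := by exact_mod_cast hc2n
  have zpow : (2:ℤ)^n = 2*2^(n-1) := by
    conv_lhs => rw [show n = (n-1)+1 by omega]
    rw [pow_succ]; ring
  have I1z : (p0:ℤ)*(a.val:ℤ) + (γ2:ℤ)*(b.val:ℤ) = (p0:ℤ) + 2^(n-1)*(k:ℤ) := by
    have h2 : (2:ℤ) * ((p0:ℤ)*(a.val:ℤ) + (γ2:ℤ)*(b.val:ℤ))
        = 2 * ((p0:ℤ) + 2^(n-1)*(k:ℤ)) := by
      linear_combination zsum + (1 - (a.val:ℤ))*zp - (b.val:ℤ)*zc + (k:ℤ)*zpow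
    exact mul_left_cancel₀ two_ne_zero h2
  have I2z : (p0:ℤ)*(c.val:ℤ) = (γ2:ℤ)*(a.val:ℤ) + (γ2:ℤ) := by
    have h2 : (2:ℤ) * ((p0:ℤ)*(c.val:ℤ)) = 2 * ((γ2:ℤ)*(a.val:ℤ) + (γ2:ℤ)) := by
      linear_combination (-(c.val:ℤ))*zp + ((a.val:ℤ)+1)*zc
    exact mul_left_cancel₀ two_ne_zero h2
  have I3z : (p0:ℤ)*(b.val:ℤ) = (β2:ℤ)*(a.val:ℤ) + (β2:ℤ) := by
    have h2 : (2:ℤ) * ((p0:ℤ)*(b.val:ℤ)) = 2 * ((β2:ℤ)*(a.val:ℤ) + (β2:ℤ)) := by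
      linear_combination (-(b.val:ℤ))*zp + ((a.val:ℤ)+1)*zb
    exact mul_left_cancel₀ two_ne_zero h2
  have I4z : (p0:ℤ)*(a.val:ℤ) + (β2:ℤ)*(c.val:ℤ) = (p0:ℤ) + 2^(n-1)*(k:ℤ) := by
    have h2 : (2:ℤ) * ((p0:ℤ)*(a.val:ℤ) + (β2:ℤ)*(c.val:ℤ))
        = 2 * ((p0:ℤ) + 2^(n-1)*(k:ℤ)) := by
      linear_combination zsum + (1 - (a.val:ℤ))*zp - (c.val:ℤ)*zb + (k:ℤ)*zpow
    exact mul_left_cancel₀ two_ne_zero h2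
  -- push to ZMod (2^n)
  have R1 : (p0:ZMod (2^n))*a + (γ2:ZMod (2^n))*b
      = (p0:ZMod (2^n)) + 2^(n-1)*(k:ZMod (2^n)) := by
    have := congrArg (fun z : ℤ => (z : ZMod (2^n))) I1z
    push_cast at this
    rwa [hav, hbv] at this
  have R2 : (p0:ZMod (2^n))*c = (γ2:ZMod (2^n))*a + (γ2:ZMod (2^n)) := by
    have := congrArg (fun z : ℤ => (z : ZMod (2^n))) I2z
    push_cast at this
    rwa [hav, hcv] at this
  have R3 : (p0:ZMod (2^n))*b = (β2:ZMod (2^n))*a + (β2:ZMod (2^n)) := by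
    have := congrArg (fun z : ℤ => (z : ZMod (2^n))) I3z
    push_cast at this
    rwa [hav, hbv] at this
  have R4 : (p0:ZMod (2^n))*a + (β2:ZMod (2^n))*c
      = (p0:ZMod (2^n)) + 2^(n-1)*(k:ZMod (2^n)) := by
    have := congrArg (fun z : ℤ => (z : ZMod (2^n))) I4z
    push_cast at this
    rwa [hav, hcv] at this
  have hb2R : b = 2*(β2:ZMod (2^n)) := by rw [← hbv, hb2n]; push_cast; ring
  have hc2R : c = 2*(γ2:ZMod (2^n)) := by rw [← hcv, hc2n]; push_cast; ring
  -- powers of two in ZMod (2^n)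
  have hR2n : (2:ZMod (2^n))^n = 0 := by
    have := ZMod.natCast_self (2^n)
    push_cast at this
    exact this
  have hsplit : (2:ZMod (2^n))^n = 2*(2:ZMod (2^n))^(n-1) := pow_pred _ n (by omega)
  have hhh : (2:ZMod (2^n))^(n-1) + (2:ZMod (2^n))^(n-1) = 0 := by
    linear_combination hR2n - hsplit
  have hw2 : 2*(2:ZMod (2^n))^(n-2) = (2:ZMod (2^n))^(n-1) := by
    have h := pow_pred (2:ZMod (2^n)) (n-1) (by omega)
    rw [show n-1-1 = n-2 by omega] at h
    exact h.symm
  have hw4 : 4*(2:ZMod (2^n))^(n-2) = 0 := by linear_combination 2*hw2 + hhh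
  have hhw : (2:ZMod (2^n))^(n-1) * (2:ZMod (2^n))^(n-2) = 0 := by
    have h : (2:ZMod (2^n))^(n-1) * (2:ZMod (2^n))^(n-2)
        = (2:ZMod (2^n))^(n-3) * (2:ZMod (2^n))^n := by
      rw [← pow_add, ← pow_add]; congr 1; omega
    rw [h, hR2n, mul_zero]
  -- evenness of γ2*β2 and oddness of p0
  obtain ⟨s, hs⟩ : ∃ s, a.val = 4*s + 1 := ⟨a.val/4, by omega⟩
  have hps : p0 = 2*s + 1 := by omega
  have heven : Even (γ2*β2) := by
    have hA : (a.val:ℤ) = 4*(s:ℤ) + 1 := by exact_mod_cast hs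
    have hpow8 : (2:ℤ)^n = 8*2^(n-3) := by
      conv_lhs => rw [show n = (n-3)+3 by omega]
      rw [pow_add]; ring
    have hz : (γ2:ℤ)*(β2:ℤ)*4 = ((2:ℤ)^(n-3)*(k:ℤ) - 2*(s:ℤ)^2 - (s:ℤ))*8 := by
      linear_combination zsum - ((a.val:ℤ)+4*(s:ℤ)+1)*hA - (c.val:ℤ)*zb
        - 2*(β2:ℤ)*zc + (k:ℤ)*hpow8
    have hzz : (γ2:ℤ)*(β2:ℤ) = ((2:ℤ)^(n-3)*(k:ℤ) - 2*(s:ℤ)^2 - (s:ℤ))*2 :=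
      mul_right_cancel₀ (show (4:ℤ) ≠ 0 by norm_num) (by linear_combination hz)
    have hev : Even ((γ2:ℤ)*(β2:ℤ)) :=
      ⟨(2:ℤ)^(n-3)*(k:ℤ) - 2*(s:ℤ)^2 - (s:ℤ), by linarith⟩
    have hcast : ((γ2*β2 : ℕ):ℤ) = (γ2:ℤ)*(β2:ℤ) := by push_cast; ring
    rw [← hcast] at hev
    exact_mod_cast hev
  -- the statement's e equals 2^(n-1)*k
  have hnp : (2:ℕ)^n = 2*2^(n-1) := by
    conv_lhs => rw [show n = (n-1)+1 by omega]
    rw [pow_succ]; ring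
  have hk2' : a.val^2 + b.val*c.val = 2*(2^(n-1)*k) + 1 := by rw [hk2, hnp]; ring
  have hediv : (a.val^2 + b.val*c.val - 1)/2 = 2^(n-1)*k := by omega
  have heR : (((a.val ^ 2 + b.val * c.val - 1) / 2 : ℕ) : ZMod (2^n))
      = 2^(n-1)*(k:ZMod (2^n)) := by rw [hediv]; push_cast; ring
  -- split the goal
  refine ⟨fun he => ?_, fun he => ?_⟩
  · -- case e = 0
    have hE0 : (2:ZMod (2^n))^(n-1)*(k:ZMod (2^n)) = 0 := by rw [← heR]; exact he
    have hdet : IsUnit (!![(p0:ZMod (2^n)), (γ2:ZMod (2^n));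
        -(β2:ZMod (2^n)), (p0:ZMod (2^n))]).det := by
      have hd : (!![(p0:ZMod (2^n)), (γ2:ZMod (2^n));
          -(β2:ZMod (2^n)), (p0:ZMod (2^n))]).det
          = ((p0*p0 + γ2*β2 : ℕ) : ZMod (2^n)) := by
        rw [Matrix.det_fin_two_of]; push_cast; ring
      rw [hd]
      refine odd_unit _ ?_
      exact (Odd.mul ⟨s, by omega⟩ ⟨s, by omega⟩).add_even heven
    refine conj_aux A _ _ hdet ?_
    rw [hm]
    ext i j
    fin_cases i <;> fin_cases j <;>
      simp [Matrix.mul_apply, Fin.sum_univ_two]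
    · linear_combination R1 + hE0
    · linear_combination R2
    · linear_combination R3
    · linear_combination -R4 - hE0
  · -- case e = 2^(n-1)
    have hEh : (2:ZMod (2^n))^(n-1)*(k:ZMod (2^n)) = (2:ZMod (2^n))^(n-1) := by
      rw [← heR, he]; push_cast; ring
    obtain ⟨u, hu⟩ := ha
    have hwa : (2:ZMod (2^n))^(n-2)*a = (2:ZMod (2^n))^(n-2) := by
      rw [hu]; linear_combination u*hw4
    have hPs : (p0:ZMod (2^n)) = 2*(s:ZMod (2^n))+1 := by
      rw [hps]; push_cast; ring
    have hhp : (2:ZMod (2^n))^(n-1)*(p0:ZMod (2^n)) = (2:ZMod (2^n))^(n-1) := by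
      linear_combination (2:ZMod (2^n))^(n-1)*hPs + (s:ZMod (2^n))*hhh
    have hwc : (2:ZMod (2^n))^(n-2)*c = (2:ZMod (2^n))^(n-1)*(γ2:ZMod (2^n)) := by
      linear_combination (2:ZMod (2^n))^(n-2)*hc2R + (γ2:ZMod (2^n))*hw2
    have hwb : (2:ZMod (2^n))^(n-2)*b = (2:ZMod (2^n))^(n-1)*(β2:ZMod (2^n)) := by
      linear_combination (2:ZMod (2^n))^(n-2)*hb2R + (β2:ZMod (2^n))*hw2
    have hdet : IsUnit (!![(p0:ZMod (2^n)) + (2:ZMod (2^n))^(n-2), (γ2:ZMod (2^n));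
        -(β2:ZMod (2^n)), (p0:ZMod (2^n)) + (2:ZMod (2^n))^(n-2)]).det := by
      have hcastw : ((2^(n-2) : ℕ) : ZMod (2^n)) = (2:ZMod (2^n))^(n-2) := by push_cast; ring
      have hd : (!![(p0:ZMod (2^n)) + (2:ZMod (2^n))^(n-2), (γ2:ZMod (2^n));
          -(β2:ZMod (2^n)), (p0:ZMod (2^n)) + (2:ZMod (2^n))^(n-2)]).det
          = (((p0+2^(n-2))*(p0+2^(n-2)) + γ2*β2 : ℕ) : ZMod (2^n)) := by
        rw [Matrix.det_fin_two_of]; push_cast [hcastw]; ring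
      rw [hd]
      refine odd_unit _ ?_
      have hwev : Even ((2:ℕ)^(n-2)) := by
        refine ⟨2^(n-3), ?_⟩
        rw [← two_mul, ← pow_succ']
        congr 1; omega
      have hodd : Odd (p0 + 2^(n-2)) := Odd.add_even ⟨s, by omega⟩ hwev
      exact (hodd.mul hodd).add_even heven
    refine conj_aux A _ _ hdet ?_
    rw [hm]
    ext i j
    fin_cases i <;> fin_cases j <;>
      simp [Matrix.mul_apply, Fin.sum_univ_two] <;> push_cast
    · linear_combination R1 + hwa + hEh - hhp - hhw
    · linear_combination R2 + hwc
    · linear_combination R3 + hwb + (β2:ZMod (2^n))*hhh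
    · linear_combination -R4 - hwa - hhp - hhw - hEh - hhh
end

section
/- Let n ≥ 2, G = Z/2^n × Z/2^n with generators x, y, ξ a primitive 2^n-th root of unity, and ω a primitive 2^{n+1}-th root of unity with ω² = ξ. Let t act on G by swapping x and y. Define α'_{1,2}(x^{a1}y^{a2}, x^{b1}y^{b2}) = ω^{a1 b2 − a2 b1} (−1)^{(a1+b1)k2 + (a2+b2)k1}, where exponents are canonical representatives in {0,…,2^n−1} and k_j = 0 if 0 ≤ a_j + b_j < 2^n and k_j = 1 if 2^n ≤ a_j + b_j < 2^{n+1}. Then α'_{1,2}(g,h) · α'_{1,2}(t(g), t(h)) = 1 for all g, h ∈ G. -/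
/-- The cocycle `α'_{1,2}(g,h) = ω^{a₁b₂ - a₂b₁}(-1)^{(a₁+b₁)k₂+(a₂+b₂)k₁}` on
`G = ℤ/2ⁿ × ℤ/2ⁿ`, with exponents computed from canonical representatives and carry
indicators `k_j`. -/
noncomputable def alphaPrime (n : ℕ) {k : Type*} [Field k] (ω : kˣ)
    (g h : ZMod (2 ^ n) × ZMod (2 ^ n)) : kˣ :=
  ω ^ ((g.1.val * h.2.val : ℤ) - (g.2.val * h.1.val : ℤ)) *
    (-1 : kˣ) ^ ((g.1.val + h.1.val) * (if g.2.val + h.2.val < 2 ^ n then 0 else 1) +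
      (g.2.val + h.2.val) * (if g.1.val + h.1.val < 2 ^ n then 0 else 1))

/-- For the swap action `t(x) = y`, `t(y) = x`, the cocycle `α'_{1,2}` satisfies
`α'_{1,2}(g,h) · α'_{1,2}(t(g),t(h)) = 1`. -/
theorem alphaPrime_mul_swap_eq_one
    (n : ℕ) (hn : 2 ≤ n) (k : Type*) [Field k] [CharZero k]
    (ξ ω : kˣ) (hξ : IsPrimitiveRoot ξ (2 ^ n))
    (hω : IsPrimitiveRoot ω (2 ^ (n + 1))) (hωξ : ω ^ 2 = ξ) :
    ∀ g h : ZMod (2 ^ n) × ZMod (2 ^ n),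
      alphaPrime n ω g h * alphaPrime n ω g.swap h.swap = 1 := by
  rintro ⟨a1, a2⟩ ⟨b1, b2⟩
  simp only [alphaPrime, Prod.swap_prod_mk]
  rw [mul_mul_mul_comm, ← zpow_add, ← pow_add]
  have h1 : ((a1.val * b2.val : ℤ) - a2.val * b1.val) +
      ((a2.val * b1.val : ℤ) - a1.val * b2.val) = 0 := by ring
  rw [h1, zpow_zero, one_mul,
    add_comm ((a2.val + b2.val) * _) ((a1.val + b1.val) * _), ← two_mul, pow_mul]
  norm_num
end

section
/- Let n ≥ 2, G = Z/2^n × Z/2^n, ξ a primitive 2^n-th root of unity, ω with ω² = ξ a primitive 2^{n+1}-th root of unity, and γ(x^{a1}y^{a2}) = ω^{a1 a2} (canonical representatives). Then for all g, h ∈ G, α_{1,2}(g,h) γ(g) γ(h) γ(gh)^{-1} = ω^{a1 b2 − a2 b1}(−1)^{(a1+b1)k2+(a2+b2)k1} where g = x^{a1}y^{a2}, h = x^{b1}y^{b2}, and k_j = 0 or 1 according as a_j + b_j < 2^n or ≥ 2^n. In particular the class of α_{1,2} in H²(G, k^×) equals the class of this cocycle α'_{1,2}. -/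
private lemma val_add_int' {N : ℕ} [NeZero N] (a b : ZMod N) :
    ((a + b).val : ℤ) = a.val + b.val - N * (if a.val + b.val < N then 0 else 1) := by
  rw [ZMod.val_add]
  rcases lt_or_ge (a.val + b.val) N with hlt | hge
  · rw [if_pos hlt, Nat.mod_eq_of_lt hlt]; push_cast; ring
  · rw [if_neg (not_lt.mpr hge), Nat.mod_eq_sub_mod hge,
      Nat.mod_eq_of_lt (by have := a.val_lt; have := b.val_lt; omega)]
    have : (((a.val + b.val - N : ℕ)) : ℤ) = a.val + b.val - N := by
      push_cast [Nat.cast_sub hge]; ring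
    rw [this]; ring

private lemma zpow_eq_of_dvd' {M : Type*} [Group M] (x : M) (m : ℕ) (hm : x ^ m = 1)
    {E F : ℤ} (h : (m : ℤ) ∣ E - F) : x ^ E = x ^ F := by
  obtain ⟨t, ht⟩ := h
  have hEF : E = F + m * t := by linarith
  rw [hEF, zpow_add, zpow_mul, zpow_natCast, hm, one_zpow, mul_one]

/-- Modifying `α_{1,2}(g,h) = ξ^{a₁b₂}` by the coboundary of `γ(g) = ω^{a₁a₂}` yields the
cocycle `α'_{1,2}`; in particular `[α_{1,2}] = [α'_{1,2}]` in `H²(G, kˣ)`. -/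
theorem alpha12_cohomologous_alphaPrime
    (n : ℕ) (hn : 2 ≤ n) (k : Type*) [Field k] [IsAlgClosed k] [CharZero k]
    (ξ ω : kˣ) (hξ : IsPrimitiveRoot ξ (2 ^ n))
    (hω : IsPrimitiveRoot ω (2 ^ (n + 1))) (hωξ : ω ^ 2 = ξ) :
    ∀ g h : ZMod (2 ^ n) × ZMod (2 ^ n),
      ξ ^ (g.1.val * h.2.val) *
          (ω ^ (g.1.val * g.2.val) * ω ^ (h.1.val * h.2.val) *
            (ω ^ ((g + h).1.val * (g + h).2.val))⁻¹) =
        alphaPrime n ω g h := by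
  intro g h
  have hNpos : 0 < 2 ^ n := by positivity
  haveI : NeZero (2 ^ n) := ⟨hNpos.ne'⟩
  obtain ⟨g1, g2⟩ := g
  obtain ⟨h1, h2⟩ := h
  -- ω ^ 2^n = -1
  have hkey : ω ^ (2 ^ (n + 1)) = 1 := hω.pow_eq_one
  have hneg : ω ^ (2 ^ n) = (-1 : kˣ) := by
    have hsq : (ω ^ 2 ^ n) * (ω ^ 2 ^ n) = 1 := by
      rw [← pow_add]
      have h2 : 2 ^ n + 2 ^ n = 2 ^ (n + 1) := by ring
      rw [h2, hkey]
    have hne : ω ^ 2 ^ n ≠ 1 :=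
      hω.pow_ne_one_of_pos_of_lt (by positivity) (by
        have : (2:ℕ) ^ n < 2 ^ (n+1) := by
          have := Nat.pow_lt_pow_right (a := 2) one_lt_two (Nat.lt_succ_self n)
          simpa using this
        exact this)
    have hsqk : ((ω : k) ^ 2 ^ n) * ((ω : k) ^ 2 ^ n) = 1 := by
      have := congrArg Units.val hsq; push_cast at this; exact this
    rcases mul_self_eq_one_iff.mp hsqk with h1' | h1'
    · exact absurd (Units.ext (by simpa using h1')) hne
    · exact Units.ext (by simpa using h1')
  simp only [alphaPrime, Prod.fst_add, Prod.snd_add]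
  set a1 := g1.val with ha1
  set a2 := g2.val with ha2
  set b1 := h1.val with hb1
  set b2 := h2.val with hb2
  set k1 : ℕ := if a1 + b1 < 2 ^ n then 0 else 1 with hk1
  set k2 : ℕ := if a2 + b2 < 2 ^ n then 0 else 1 with hk2
  have hv1 : (((g1 + h1).val : ℤ)) = a1 + b1 - 2 ^ n * (k1 : ℤ) := by
    rw [val_add_int' g1 h1, hk1]
    push_cast [apply_ite (Nat.cast : ℕ → ℤ)]
    ring
  have hv2 : (((g2 + h2).val : ℤ)) = a2 + b2 - 2 ^ n * (k2 : ℤ) := by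
    rw [val_add_int' g2 h2, hk2]
    push_cast [apply_ite (Nat.cast : ℕ → ℤ)]
    ring
  -- rewrite everything as ω-zpowers
  rw [← hωξ, ← pow_mul, ← hneg, ← pow_mul,
    ← zpow_natCast ω (2 * (a1 * b2)), ← zpow_natCast ω (a1 * a2),
    ← zpow_natCast ω (b1 * b2), ← zpow_natCast ω ((g1 + h1).val * (g2 + h2).val),
    ← zpow_natCast ω (2 ^ n * ((a1 + b1) * k2 + (a2 + b2) * k1)),
    ← zpow_neg, ← zpow_add, ← zpow_add, ← zpow_add, ← zpow_add]
  apply zpow_eq_of_dvd' ω (2 ^ (n + 1)) hkey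
  refine ⟨-(2 ^ (n - 1) * (k1 * k2) : ℤ), ?_⟩
  have hN2 : (2 : ℤ) ^ (n + 1) * 2 ^ (n - 1) = 2 ^ n * 2 ^ n := by
    rw [← pow_add, ← pow_add]; congr 1; omega
  push_cast
  rw [hv1, hv2]
  linear_combination ((k1 * k2 : ℤ)) * hN2
end

section
/- Let G = Z/4 × Z/4 with generators x, y and let i be a primitive 4th root of unity. Let t act on G by t(x) = xy², t(y) = x²y^{-1}. Define α_{p,q}(x^{a1}y^{a2}, x^{b1}y^{b2}) = i^{a_p b_q}. Then the product cocycle α = α_{1,1}α_{1,2}α_{2,2} satisfies α(g,h) · α(t(g), t(h)) = 1 for all g, h ∈ G. -/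
/-- For `G = ℤ/4 × ℤ/4` with the action `t(x) = xy²`, `t(y) = x²y⁻¹`, the cocycle
`α = α_{1,1}α_{1,2}α_{2,2}` (where `α_{p,q}(g,h) = i^{a_p b_q}`) satisfies
`α(g,h) · α(t(g),t(h)) = 1` for all `g, h ∈ G`. -/
theorem alpha_product_case6_antisymmetric
    (k : Type*) [Field k] [CharZero k]
    (i : kˣ) (hi : IsPrimitiveRoot i 4)
    (t : ZMod 4 × ZMod 4 → ZMod 4 × ZMod 4)
    (ht : ∀ g : ZMod 4 × ZMod 4, t g = (g.1 + 2 * g.2, 2 * g.1 - g.2)) :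
    ∀ g h : ZMod 4 × ZMod 4,
      (i ^ (g.1.val * h.1.val) * i ^ (g.1.val * h.2.val) * i ^ (g.2.val * h.2.val)) *
        (i ^ ((t g).1.val * (t h).1.val) * i ^ ((t g).1.val * (t h).2.val) *
          i ^ ((t g).2.val * (t h).2.val)) = 1 := by
  intro g h
  rw [ht g, ht h]
  rw [← pow_add, ← pow_add, ← pow_add, ← pow_add, ← pow_add, hi.pow_eq_one_iff_dvd]
  obtain ⟨a, b⟩ := g
  obtain ⟨c, d⟩ := h
  rw [← ZMod.natCast_eq_zero_iff]
  push_cast [ZMod.natCast_val, ZMod.cast_id]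
  revert a b c d
  decide
end

section
/- Let G = Z/4 × Z/4 with generators x, y, i a primitive 4th root of unity, α_{1,2}(x^{a1}y^{a2}, x^{b1}y^{b2}) = i^{a1 b2}, and f : G → G the automorphism with f(x) = xy, f(y) = y. Then for all g, h ∈ G, α_{1,2}²(f(g), f(h)) = α_{1,1}²(g,h) · α_{1,2}²(g,h), i.e. pulling back the cocycle α_{1,2}² along f × f yields α_{1,1}² α_{1,2}². Moreover f commutes with the automorphism t(x) = x^{-1}, t(y) = y^{-1}. -/
/-- For `G = ℤ/4 × ℤ/4` and the automorphism `f(x) = xy`, `f(y) = y` (i.e.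
`f(a,b) = (a, a+b)`), pulling back the cocycle `α_{1,2}²` along `f × f` gives
`α_{1,1}² · α_{1,2}²`; moreover `f` commutes with the inversion automorphism. -/
theorem pullback_alpha12_sq_along_f
    (k : Type*) [Field k] [CharZero k]
    (i : kˣ) (hi : IsPrimitiveRoot i 4)
    (f : ZMod 4 × ZMod 4 → ZMod 4 × ZMod 4)
    (hf : ∀ g : ZMod 4 × ZMod 4, f g = (g.1, g.1 + g.2)) :
    (∀ g h : ZMod 4 × ZMod 4,
        (i ^ ((f g).1.val * (f h).2.val)) ^ 2 =
          (i ^ (g.1.val * h.1.val)) ^ 2 * (i ^ (g.1.val * h.2.val)) ^ 2) ∧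
      (∀ g : ZMod 4 × ZMod 4, f (-g) = -(f g)) := by
  have h4 : i ^ 4 = 1 := hi.pow_eq_one
  have key : ∀ m n : ℕ, m % 4 = n % 4 → i ^ m = i ^ n := by
    intro m n h
    rw [← Nat.div_add_mod m 4, ← Nat.div_add_mod n 4, pow_add, pow_add,
      pow_mul, pow_mul, h4, one_pow, one_pow, h]
  constructor
  · intro g h
    rw [hf, hf]
    simp only
    rw [← pow_mul, ← pow_mul, ← pow_mul, ← pow_add]
    apply key
    revert g h
    have : ∀ a b c : ZMod 4,
        a.val * (b + c).val * 2 % 4 = (a.val * b.val * 2 + a.val * c.val * 2) % 4 := by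
      decide
    intro g h
    exact this g.1 h.1 h.2
  · intro g
    rw [hf, hf]
    simp only [Prod.fst_neg, Prod.snd_neg, Prod.neg_mk, neg_add]
end

section
/- Let G = Z/4 × Z/4 with generators x, y, i a primitive 4th root of unity, and t the automorphism t(x) = xy², t(y) = x²y^{-1}. With α_{p,q}(x^{a1}y^{a2},x^{b1}y^{b2}) = i^{a_p b_q}: the pullback of α_{1,2} along t × t equals α_{1,2}^{3} α_{1,1}^{2} α_{2,2}^{2} as functions G × G → k^×, i.e. α_{1,2}(t(g), t(h)) = i^{a1 b2}(−1)^{a1 b2 + a1 b1 + a2 b2} for g = x^{a1}y^{a2}, h = x^{b1}y^{b2}. -/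
private lemma pow_mod_four {k : Type*} [Field k] (u : kˣ) (hu : u ^ 4 = 1) (n : ℕ) :
    u ^ n = u ^ (n % 4) := by
  conv_lhs => rw [← Nat.mod_add_div n 4]
  rw [pow_add, pow_mul, hu, one_pow, mul_one]

/-- For `G = ℤ/4 × ℤ/4` and `t(x) = xy²`, `t(y) = x²y⁻¹`, the pullback of
`α_{1,2}(g,h) = i^{a₁b₂}` along `t × t` equals `α_{1,2}³ α_{1,1}² α_{2,2}²`, i.e.
`α_{1,2}(t(g),t(h)) = i^{a₁b₂}(-1)^{a₁b₂ + a₁b₁ + a₂b₂}`. -/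
theorem pullback_alpha12_case6
    (k : Type*) [Field k] [CharZero k]
    (i : kˣ) (hi : IsPrimitiveRoot i 4)
    (t : ZMod 4 × ZMod 4 → ZMod 4 × ZMod 4)
    (ht : ∀ g : ZMod 4 × ZMod 4, t g = (g.1 + 2 * g.2, 2 * g.1 - g.2)) :
    ∀ g h : ZMod 4 × ZMod 4,
      i ^ ((t g).1.val * (t h).2.val) =
        i ^ (g.1.val * h.2.val) *
          (-1 : kˣ) ^ (g.1.val * h.2.val + g.1.val * h.1.val + g.2.val * h.2.val) := by
  have h4 : i ^ 4 = 1 := hi.pow_eq_one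
  have h2 : i ^ 2 = -1 := by
    have hc : IsPrimitiveRoot ((i : k)) 4 := IsPrimitiveRoot.coe_units_iff.mpr hi
    have h2' : IsPrimitiveRoot ((i : k) ^ 2) 2 := hc.pow (by norm_num) (by norm_num)
    have := h2'.eq_neg_one_of_two_right
    ext
    push_cast
    simpa using this
  intro g h
  rw [ht g, ht h]
  rw [show ((-1 : kˣ)) = i ^ 2 from h2.symm, ← pow_mul, ← pow_add]
  rw [pow_mod_four i h4, pow_mod_four i h4
    (g.1.val * h.2.val + 2 * (g.1.val * h.2.val + g.1.val * h.1.val + g.2.val * h.2.val))]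
  congr 1
  revert g h
  decide
end

section
/- Let G = Z/4 × Z/4 with generators x, y, i a primitive 4th root of unity, and f : G → G the automorphism with f(x) = x, f(y) = x²y. Then for all g = x^{a1}y^{a2}, h = x^{b1}y^{b2} in G, α_{1,2}(f(g), f(h)) = i^{a1 b2}(−1)^{a2 b2}, i.e. the pullback of α_{1,2} along f × f equals α_{1,2} · α_{2,2}². Moreover f commutes with the automorphism t(x) = x, t(y) = y^{-1}. -/
/-- For `G = ℤ/4 × ℤ/4` and the automorphism `f(x) = x`, `f(y) = x²y` (i.e.
`f(a,b) = (a + 2b, b)`), pulling back `α_{1,2}` along `f × f` gives `α_{1,2} · α_{2,2}²`,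
i.e. `α_{1,2}(f(g),f(h)) = i^{a₁b₂}(-1)^{a₂b₂}`; moreover `f` commutes with the
automorphism `t(x) = x`, `t(y) = y⁻¹`. -/
theorem pullback_alpha12_along_f2
    (k : Type*) [Field k] [CharZero k]
    (i : kˣ) (hi : IsPrimitiveRoot i 4)
    (f : ZMod 4 × ZMod 4 → ZMod 4 × ZMod 4)
    (hf : ∀ g : ZMod 4 × ZMod 4, f g = (g.1 + 2 * g.2, g.2)) :
    (∀ g h : ZMod 4 × ZMod 4,
        i ^ ((f g).1.val * (f h).2.val) =
          i ^ (g.1.val * h.2.val) * (-1 : kˣ) ^ (g.2.val * h.2.val)) ∧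
      (∀ g : ZMod 4 × ZMod 4, f (g.1, -g.2) = ((f g).1, -(f g).2)) := by
  have h4 : i ^ 4 = 1 := hi.pow_eq_one
  have h2 : i ^ 2 = -1 := by
    have hne : i ^ 2 ≠ 1 := hi.pow_ne_one_of_pos_of_lt (by norm_num) (by norm_num)
    have hk : ((i : k)) ^ 2 = -1 := by
      have hk4 : ((i : k)) ^ 4 = 1 := by
        have := congrArg (Units.val) h4; push_cast at this; exact_mod_cast this
      have hk2 : ((i : k)) ^ 2 ≠ 1 := by
        intro h
        exact hne (Units.ext (by push_cast; exact h))
      have : (((i : k)) ^ 2 - 1) * (((i : k)) ^ 2 + 1) = 0 := by ring_nf; linear_combination hk4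
      rcases mul_eq_zero.mp this with h | h
      · exact absurd (sub_eq_zero.mp h) hk2
      · linear_combination h
    exact Units.ext (by push_cast; exact hk)
  have hmod : ∀ m : ℕ, i ^ m = i ^ (m % 4) := by
    intro m
    conv_lhs => rw [← Nat.div_add_mod m 4]
    rw [pow_add, pow_mul, h4, one_pow, one_mul]
  constructor
  · intro g h
    rw [hf g, hf h]
    simp only
    rw [← h2, ← pow_mul, ← pow_add, hmod ((g.1 + 2 * g.2).val * h.2.val),
      hmod (g.1.val * h.2.val + 2 * (g.2.val * h.2.val))]
    congr 1
    revert g h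
    decide
  · intro g
    rw [hf g, hf (g.1, -g.2)]
    simp only
    congr 1
    have : (2 : ZMod 4) * (-g.2) = 2 * g.2 := by
      revert g; decide
    rw [this]
end
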